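/- arXiv:2006.08279 — 5 statements merged into one kernel-verified Lean document; each statement's English description precedes it below -/
import Mathlib

section
/- Let κ := sup_{u ∈ H¹(ℝ²), ‖u‖_{H¹} ≤ 1} ∫_{ℝ²} (e^{4π|u|²} − 1) dx, which is finite. Then for every u ∈ H¹(ℝ²) with ‖∇u‖_{L²} < 1 one has ∫_{ℝ²} (e^{4π|u|²} − 1) dx ≤ κ · ‖u‖²_{L²} / (1 − ‖∇u‖²_{L²}). -/
open MeasureTheory Real Filter
open scoped Topology ENNReal

noncomputable section

abbrev E2 : Type := EuclideanSpace ℝ (Fin 2)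

/-- Squared `L²` norm. -/
def l2Sq (u : E2 → ℂ) : ℝ := ∫ x : E2, ‖u x‖ ^ 2

/-- Squared `L²` norm of the gradient. -/
def gradSq (u : E2 → ℂ) : ℝ := ∫ x : E2, ‖fderiv ℝ u x‖ ^ 2

/-- Membership in `H¹(ℝ²)`. -/
def MemH1 (u : E2 → ℂ) : Prop :=
  MemLp u 2 volume ∧ Differentiable ℝ u ∧ MemLp (fun x => fderiv ℝ u x) 2 volume

/-- Integrability of all exponentials `e^{a|u|²} - 1`. -/
def ExpIntegrable (u : E2 → ℂ) : Prop :=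
  ∀ a : ℝ, 0 < a → Integrable (fun x : E2 => Real.exp (a * ‖u x‖ ^ 2) - 1)

/-- The nonlinearity `f_μ`. -/
def fmu (μ : ℝ) (z : ℂ) : ℂ :=
  ((Real.exp (4 * π * ‖z‖ ^ 2) - 1 - 4 * π * μ * ‖z‖ ^ 2 : ℝ) : ℂ) * z

/-- The potential `F_μ`. -/
def Fmu (μ : ℝ) (z : ℂ) : ℝ :=
  (Real.exp (4 * π * ‖z‖ ^ 2) - 1 - 4 * π * ‖z‖ ^ 2 - 8 * π ^ 2 * μ * ‖z‖ ^ 4) / (8 * π)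

/-- `Re (z̄ f_μ(z))`. -/
def nlDensity (μ : ℝ) (z : ℂ) : ℝ :=
  (Real.exp (4 * π * ‖z‖ ^ 2) - 1 - 4 * π * μ * ‖z‖ ^ 2) * ‖z‖ ^ 2

/-- Energy. -/
def Emu (μ : ℝ) (u : E2 → ℂ) : ℝ := gradSq u / 2 - ∫ x : E2, Fmu μ (u x)

/-- Action. -/
def Smu (μ : ℝ) (u : E2 → ℂ) : ℝ := Emu μ u + l2Sq u / 2

/-- The functional `P_μ`. -/
def Pmu (μ : ℝ) (u : E2 → ℂ) : ℝ := l2Sq u / 2 - ∫ x : E2, Fmu μ (u x)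

/-- The virial functional `I_μ`. -/
def Imu (μ : ℝ) (u : E2 → ℂ) : ℝ :=
  gradSq u - ∫ x : E2, (nlDensity μ (u x) - 2 * Fmu μ (u x))

/-- Laplacian on `ℝ²` (sum of second directional derivatives). -/
def lap (v : E2 → ℂ) (x : E2) : ℂ :=
  ∑ i : Fin 2, fderiv ℝ (fun y => fderiv ℝ v y (EuclideanSpace.single i 1)) x
      (EuclideanSpace.single i 1)

/-- `φ` is a (pointwise) solution to the elliptic equation `-Δφ + φ = f_μ(φ)`. -/
def IsEllipticSolution (μ : ℝ) (φ : E2 → ℂ) : Prop :=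
  ∀ x, -lap φ x + φ x = fmu μ (φ x)

/-- Ground state for `-ΔQ + Q = f_μ(Q)`. -/
structure IsGroundState (μ : ℝ) (Q : E2 → ℂ) : Prop where
  mem : MemH1 Q
  expint : ExpIntegrable Q
  nonzero : ¬ Q =ᵐ[volume] (0 : E2 → ℂ)
  radial : ∀ x y : E2, ‖x‖ = ‖y‖ → Q x = Q y
  solves : IsEllipticSolution μ Q
  minimal : ∀ φ : E2 → ℂ, MemH1 φ → ExpIntegrable φ → ¬ φ =ᵐ[volume] (0 : E2 → ℂ) →
    IsEllipticSolution μ φ → Smu μ Q ≤ Smu μ φ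
  grad_pos : 0 < gradSq Q
  grad_lt_one : gradSq Q < 1


lemma memℒp_comp_smul {F : Type*} [NormedAddCommGroup F] {f : E2 → F}
    (hf : MemLp f 2 volume) {c : ℝ} (hc : c ≠ 0) :
    MemLp (fun x => f (c • x)) 2 volume := by
  have hemb : MeasurableEmbedding (fun x : E2 => c • x) :=
    ((Homeomorph.smul (Units.mk0 c hc) (α := E2)).toMeasurableEquiv).measurableEmbedding
  have := (hf.smul_measure (c := ENNReal.ofReal |(c ^ Module.finrank ℝ E2)⁻¹|)
      ENNReal.ofReal_ne_top)
  rw [← Measure.map_addHaar_smul volume hc] at this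
  exact (hemb.memLp_map_measure_iff).mp this

lemma integral_comp_inv_smul_E2 (f : E2 → ℝ) {c : ℝ} (hc : 0 ≤ c) :
    ∫ x : E2, f (c⁻¹ • x) = c ^ 2 * ∫ x : E2, f x := by
  have := Measure.integral_comp_inv_smul_of_nonneg volume f hc
  simpa [finrank_euclideanSpace_fin, smul_eq_mul] using this

/-- the refined Moser–Trudinger inequality with the sharp constant `κ`,
where `κ` is the (finite) supremum of `∫ (e^{4π|u|²} - 1)` over the unit ball of `H¹(ℝ²)`. -/
theorem refined_moser_trudinger (κ : ℝ)
    (hκ : IsLUB {r : ℝ | ∃ u : E2 → ℂ, MemH1 u ∧ l2Sq u + gradSq u ≤ 1 ∧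
        r = ∫ x : E2, (Real.exp (4 * π * ‖u x‖ ^ 2) - 1)} κ)
    (u : E2 → ℂ) (hu : MemH1 u) (hgrad : Real.sqrt (gradSq u) < 1) :
    (∫ x : E2, (Real.exp (4 * π * ‖u x‖ ^ 2) - 1)) ≤ κ * l2Sq u / (1 - gradSq u) := by
  have hg0 : 0 ≤ gradSq u := integral_nonneg (fun x => sq_nonneg _)
  have hL0 : 0 ≤ l2Sq u := integral_nonneg (fun x => sq_nonneg _)
  have hg1 : gradSq u < 1 := by
    nlinarith [Real.sq_sqrt hg0, Real.sqrt_nonneg (gradSq u)]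
  rcases eq_or_lt_of_le hL0 with hL | hL
  · -- trivial case: u = 0 a.e.
    have hint : Integrable (fun x : E2 => ‖u x‖ ^ 2) := by
      have := hu.1.integrable_norm_rpow two_ne_zero ENNReal.ofNat_ne_top
      simpa [Real.rpow_natCast] using this
    have h0 : (fun x : E2 => ‖u x‖ ^ 2) =ᵐ[volume] 0 := by
      refine (integral_eq_zero_iff_of_nonneg (fun x => sq_nonneg _) hint).mp ?_
      simpa [l2Sq] using hL.symm
    have hz : (fun x : E2 => Real.exp (4 * π * ‖u x‖ ^ 2) - 1) =ᵐ[volume] 0 := by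
      filter_upwards [h0] with x hx
      have h2 : ‖u x‖ ^ 2 = 0 := hx
      show Real.exp (4 * π * ‖u x‖ ^ 2) - 1 = 0
      rw [h2, mul_zero, Real.exp_zero, sub_self]
    rw [integral_congr_ae hz]
    simp [← hL]
  · -- main case: scaling argument
    set g := gradSq u with hgdef
    set L := l2Sq u with hLdef
    set c := Real.sqrt ((1 - g) / L) with hcdef
    have hcpos : 0 < c := Real.sqrt_pos.mpr (div_pos (by linarith) hL)
    have hc2 : c ^ 2 = (1 - g) / L := Real.sq_sqrt (le_of_lt (div_pos (by linarith) hL))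
    have hc2L : c ^ 2 * L = 1 - g := by
      rw [hc2]; field_simp
    set w : E2 → ℂ := fun x => u (c⁻¹ • x) with hwdef
    set T : E2 →L[ℝ] E2 := c⁻¹ • ContinuousLinearMap.id ℝ E2 with hTdef
    have hT : ∀ x : E2, T x = c⁻¹ • x := fun x => rfl
    have hfd : ∀ x : E2, HasFDerivAt w (c⁻¹ • fderiv ℝ u (c⁻¹ • x)) x := by
      intro x
      have h1 : HasFDerivAt w ((fderiv ℝ u (c⁻¹ • x)).comp T) x := by
        have h2 := (hu.2.1 (c⁻¹ • x)).hasFDerivAt.comp x T.hasFDerivAt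
        exact h2
      convert h1 using 1
      ext v
      simp [T, ContinuousLinearMap.map_smul]
    have hfd' : ∀ x : E2, fderiv ℝ w x = c⁻¹ • fderiv ℝ u (c⁻¹ • x) := fun x =>
      (hfd x).fderiv
    have hwdiff : Differentiable ℝ w := fun x => (hfd x).differentiableAt
    have hwmem : MemH1 w := by
      refine ⟨memℒp_comp_smul hu.1 (inv_ne_zero hcpos.ne'), hwdiff, ?_⟩
      have heq : (fun x : E2 => fderiv ℝ w x)
          = fun x : E2 => c⁻¹ • fderiv ℝ u (c⁻¹ • x) := funext hfd'
      rw [heq]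
      exact (memℒp_comp_smul hu.2.2 (inv_ne_zero hcpos.ne')).const_smul c⁻¹
    have hl2w : l2Sq w = c ^ 2 * L := by
      rw [hLdef, l2Sq, l2Sq]
      exact integral_comp_inv_smul_E2 (fun y => ‖u y‖ ^ 2) hcpos.le
    have hgradw : gradSq w = g := by
      have h1 : gradSq w = ∫ x : E2, (c⁻¹) ^ 2 * ‖fderiv ℝ u (c⁻¹ • x)‖ ^ 2 := by
        rw [gradSq]
        refine integral_congr_ae (Eventually.of_forall fun x => ?_)
        show ‖fderiv ℝ w x‖ ^ 2 = c⁻¹ ^ 2 * ‖fderiv ℝ u (c⁻¹ • x)‖ ^ 2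
        rw [hfd' x]
        rw [norm_smul c⁻¹ (fderiv ℝ u (c⁻¹ • x)), mul_pow]
        congr 1
        rw [Real.norm_eq_abs, abs_of_pos (inv_pos.mpr hcpos)]
      rw [h1, integral_const_mul,
        integral_comp_inv_smul_E2 (fun y => ‖fderiv ℝ u y‖ ^ 2) hcpos.le]
      have : (c⁻¹) ^ 2 * (c ^ 2 * ∫ x : E2, ‖fderiv ℝ u x‖ ^ 2) = g := by
        rw [hgdef, gradSq]
        field_simp
      exact this
    have hexpw : (∫ x : E2, (Real.exp (4 * π * ‖w x‖ ^ 2) - 1))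
        = c ^ 2 * ∫ x : E2, (Real.exp (4 * π * ‖u x‖ ^ 2) - 1) :=
      integral_comp_inv_smul_E2 (fun y => Real.exp (4 * π * ‖u y‖ ^ 2) - 1) hcpos.le
    have hmem : (∫ x : E2, (Real.exp (4 * π * ‖w x‖ ^ 2) - 1)) ∈
        {r : ℝ | ∃ v : E2 → ℂ, MemH1 v ∧ l2Sq v + gradSq v ≤ 1 ∧
          r = ∫ x : E2, (Real.exp (4 * π * ‖v x‖ ^ 2) - 1)} := by
      exact ⟨w, hwmem, by rw [hl2w, hgradw, hc2L]; linarith, rfl⟩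
    have hle : (∫ x : E2, (Real.exp (4 * π * ‖w x‖ ^ 2) - 1)) ≤ κ := hκ.1 hmem
    rw [hexpw] at hle
    have hc2pos : 0 < c ^ 2 := pow_pos hcpos 2
    have : (∫ x : E2, (Real.exp (4 * π * ‖u x‖ ^ 2) - 1)) ≤ κ / c ^ 2 := by
      rw [le_div_iff₀ hc2pos]
      linarith [hle]
    calc (∫ x : E2, (Real.exp (4 * π * ‖u x‖ ^ 2) - 1)) ≤ κ / c ^ 2 := this
      _ = κ * L / (1 - g) := by rw [hc2, div_div_eq_mul_div]
end
end

section
/- Let μ ∈ {0,1} and let u₀ ∈ H¹(ℝ²) satisfy ‖∇u₀‖_{L²} < 1 and ‖u₀‖_{L²}/(1 − ‖∇u₀‖²_{L²}) < √(π/κ), where κ := sup_{‖u‖_{H¹} ≤ 1} ∫_{ℝ²}(e^{4π|u|²}−1)dx. Then the maximal solution of the focusing NLS i∂_t u + Δu = −f_μ(u), u(0) = u₀, exists globally in time (T* = +∞). -/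
open MeasureTheory Real Filter
open scoped Topology ENNReal

noncomputable section

section Helpers

lemma exp_quad {s : ℝ} (hs : 0 ≤ s) : 1 + s + s ^ 2 / 2 ≤ Real.exp s := by
  have h := Real.sum_le_exp_of_nonneg hs 3
  simp [Finset.sum_range_succ, Nat.factorial] at h
  convert h using 1

lemma Fmu_nonneg {μ : ℝ} (hμ : μ = 0 ∨ μ = 1) (z : ℂ) : 0 ≤ Fmu μ z := by
  have hπ : (0:ℝ) < π := Real.pi_pos
  have hz : (0:ℝ) ≤ ‖z‖ ^ 2 := by positivity
  have h2 : 1 + (4 * π * ‖z‖ ^ 2) + (4 * π * ‖z‖ ^ 2) ^ 2 / 2 ≤ Real.exp (4 * π * ‖z‖ ^ 2) :=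
    exp_quad (by positivity)
  have h4 : ‖z‖ ^ 4 = (‖z‖ ^ 2) ^ 2 := by ring
  rcases hμ with rfl | rfl <;>
  · unfold Fmu
    apply div_nonneg _ (by positivity)
    nlinarith [sq_nonneg (‖z‖ ^ 2), sq_nonneg π]

lemma Fmu_le {μ : ℝ} (hμ : μ = 0 ∨ μ = 1) (z : ℂ) :
    Fmu μ z ≤ (Real.exp (4 * π * ‖z‖ ^ 2) - 1) / (8 * π) := by
  have hπ : (0:ℝ) < π := Real.pi_pos
  have hz : (0:ℝ) ≤ ‖z‖ ^ 2 := by positivity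
  have h4 : (0:ℝ) ≤ ‖z‖ ^ 4 := by positivity
  unfold Fmu
  refine (div_le_div_iff_of_pos_right (by positivity)).mpr ?_
  rcases hμ with rfl | rfl <;> nlinarith

lemma finrank_E2 : Module.finrank ℝ E2 = 2 := finrank_euclideanSpace_fin

lemma integral_comp_smul_E2 {F : Type*} [NormedAddCommGroup F] [NormedSpace ℝ F]
    (f : E2 → F) {lam : ℝ} (hlam : 0 < lam) :
    ∫ x : E2, f (lam • x) = (lam ^ 2)⁻¹ • ∫ x : E2, f x := by
  rw [Measure.integral_comp_smul volume f lam, finrank_E2, abs_of_pos (by positivity)]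

lemma comp_smul_facts (w : E2 → ℂ) (hw : MemH1 w) {lam : ℝ} (hlam : 0 < lam) :
    MemH1 (fun x => w (lam • x)) ∧
    l2Sq (fun x => w (lam • x)) = (lam ^ 2)⁻¹ * l2Sq w ∧
    gradSq (fun x => w (lam • x)) = gradSq w ∧
    (∫ x : E2, (Real.exp (4 * π * ‖w (lam • x)‖ ^ 2) - 1)) =
      (lam ^ 2)⁻¹ * ∫ x : E2, (Real.exp (4 * π * ‖w x‖ ^ 2) - 1) := by
  obtain ⟨hw2, hwd, hwg⟩ := hw
  have hlam0 : lam ≠ 0 := hlam.ne'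
  set v : E2 → ℂ := fun x => w (lam • x) with hv
  have hsm : Differentiable ℝ (fun x : E2 => lam • x) := (differentiable_id.const_smul lam)
  have hvd : Differentiable ℝ v := hwd.comp hsm
  have hfd : ∀ x, fderiv ℝ v x = lam • fderiv ℝ w (lam • x) := by
    intro x
    have h1 : fderiv ℝ v x = (fderiv ℝ w (lam • x)).comp (fderiv ℝ (fun x : E2 => lam • x) x) :=
      fderiv_comp x (hwd _) (hsm x)
    have h2 : fderiv ℝ (fun x : E2 => lam • x) x = lam • ContinuousLinearMap.id ℝ E2 := by
      rw [fderiv_fun_const_smul differentiableAt_fun_id lam, fderiv_fun_id]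
    rw [h1, h2, ContinuousLinearMap.comp_smul, ContinuousLinearMap.comp_id]
  have hnfd : ∀ x, ‖fderiv ℝ v x‖ ^ 2 = lam ^ 2 * ‖fderiv ℝ w (lam • x)‖ ^ 2 := by
    intro x
    rw [hfd x, norm_smul lam (fderiv ℝ w (lam • x)), Real.norm_eq_abs, abs_of_pos hlam, mul_pow]
  have hl2 : l2Sq v = (lam ^ 2)⁻¹ * l2Sq w := by
    unfold l2Sq
    rw [integral_comp_smul_E2 (fun y => ‖w y‖ ^ 2) hlam, smul_eq_mul]
  have hw2i : Integrable (fun x => ‖w x‖ ^ 2) volume :=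
    (memLp_two_iff_integrable_sq_norm hw2.aestronglyMeasurable).mp hw2
  have hv2i : Integrable (fun x => ‖v x‖ ^ 2) volume := hw2i.comp_smul hlam0
  have hv2 : MemLp v 2 volume :=
    (memLp_two_iff_integrable_sq_norm hvd.continuous.aestronglyMeasurable).mpr hv2i
  have hwgi : Integrable (fun x => ‖fderiv ℝ w x‖ ^ 2) volume :=
    (memLp_two_iff_integrable_sq_norm hwg.aestronglyMeasurable).mp hwg
  have hvgi : Integrable (fun x => ‖fderiv ℝ v x‖ ^ 2) volume := by
    have h : Integrable (fun x : E2 => lam ^ 2 * ‖fderiv ℝ w (lam • x)‖ ^ 2) volume :=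
      (hwgi.comp_smul hlam0).const_mul _
    exact h.congr (Eventually.of_forall fun x => (hnfd x).symm)
  have hvg : MemLp (fun x => fderiv ℝ v x) 2 volume :=
    (memLp_two_iff_integrable_sq_norm ((measurable_fderiv ℝ v).aestronglyMeasurable)).mpr hvgi
  have hgrad : gradSq v = gradSq w := by
    unfold gradSq
    calc ∫ x : E2, ‖fderiv ℝ v x‖ ^ 2
        = ∫ x : E2, lam ^ 2 * ‖fderiv ℝ w (lam • x)‖ ^ 2 :=
          integral_congr_ae (Eventually.of_forall hnfd)
      _ = lam ^ 2 * ∫ x : E2, ‖fderiv ℝ w (lam • x)‖ ^ 2 := integral_const_mul _ _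
      _ = lam ^ 2 * ((lam ^ 2)⁻¹ * ∫ x : E2, ‖fderiv ℝ w x‖ ^ 2) := by
          rw [integral_comp_smul_E2 (fun y => ‖fderiv ℝ w y‖ ^ 2) hlam, smul_eq_mul]
      _ = ∫ x : E2, ‖fderiv ℝ w x‖ ^ 2 := by field_simp
  have hexp : (∫ x : E2, (Real.exp (4 * π * ‖w (lam • x)‖ ^ 2) - 1)) =
      (lam ^ 2)⁻¹ * ∫ x : E2, (Real.exp (4 * π * ‖w x‖ ^ 2) - 1) := by
    rw [integral_comp_smul_E2 (fun y => Real.exp (4 * π * ‖w y‖ ^ 2) - 1) hlam, smul_eq_mul]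
  exact ⟨⟨hv2, hvd, hvg⟩, hl2, hgrad, hexp⟩

lemma tm_bound (κ : ℝ)
    (hκ : IsLUB {r : ℝ | ∃ v : E2 → ℂ, MemH1 v ∧ l2Sq v + gradSq v ≤ 1 ∧
        r = ∫ x : E2, (Real.exp (4 * π * ‖v x‖ ^ 2) - 1)} κ)
    (w : E2 → ℂ) (hw : MemH1 w) (hg : gradSq w < 1) :
    (∫ x : E2, (Real.exp (4 * π * ‖w x‖ ^ 2) - 1)) ≤ κ * l2Sq w / (1 - gradSq w) := by
  set m := l2Sq w with hmdef
  set a := gradSq w with hadef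
  have ha1 : 0 < 1 - a := by linarith
  have hm0 : 0 ≤ m := integral_nonneg fun x => by positivity
  rcases eq_or_lt_of_le hm0 with hm | hm
  · -- zero mass: w = 0 a.e.
    have hw2i : Integrable (fun x => ‖w x‖ ^ 2) volume :=
      (memLp_two_iff_integrable_sq_norm hw.1.aestronglyMeasurable).mp hw.1
    have h0 : (∫ x : E2, ‖w x‖ ^ 2) = 0 := hm.symm
    have hz : (fun x : E2 => ‖w x‖ ^ 2) =ᵐ[volume] 0 :=
      (integral_eq_zero_iff_of_nonneg (fun x => by positivity) hw2i).mp h0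
    have h1 : (fun x : E2 => Real.exp (4 * π * ‖w x‖ ^ 2) - 1) =ᵐ[volume] 0 := by
      filter_upwards [hz] with x hx
      simp only [Pi.zero_apply] at hx ⊢
      rw [hx]
      simp
    rw [integral_congr_ae h1]
    simp [← hm]
  · -- positive mass: rescale
    have hlamsq : 0 < m / (1 - a) := div_pos hm ha1
    set lam := Real.sqrt (m / (1 - a)) with hlamdef
    have hlam : 0 < lam := Real.sqrt_pos.mpr hlamsq
    have hlam2 : lam ^ 2 = m / (1 - a) := Real.sq_sqrt hlamsq.le
    obtain ⟨hvmem, hvl2, hvgrad, hvexp⟩ := comp_smul_facts w hw hlam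
    have hsum : l2Sq (fun x => w (lam • x)) + gradSq (fun x => w (lam • x)) ≤ 1 := by
      rw [hvl2, hvgrad, hlam2, ← hadef, ← hmdef, inv_div, div_mul_cancel₀ _ hm.ne']
      linarith
    have hrmem : ((lam ^ 2)⁻¹ * ∫ x : E2, (Real.exp (4 * π * ‖w x‖ ^ 2) - 1)) ∈
        {r : ℝ | ∃ v : E2 → ℂ, MemH1 v ∧ l2Sq v + gradSq v ≤ 1 ∧
          r = ∫ x : E2, (Real.exp (4 * π * ‖v x‖ ^ 2) - 1)} :=
      ⟨fun x => w (lam • x), hvmem, hsum, hvexp.symm⟩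
    have hle := hκ.1 hrmem
    have hlam2pos : 0 < lam ^ 2 := by positivity
    calc (∫ x : E2, (Real.exp (4 * π * ‖w x‖ ^ 2) - 1))
        = lam ^ 2 * ((lam ^ 2)⁻¹ * ∫ x : E2, (Real.exp (4 * π * ‖w x‖ ^ 2) - 1)) := by
          field_simp
      _ ≤ lam ^ 2 * κ := mul_le_mul_of_nonneg_left hle hlam2pos.le
      _ = κ * m / (1 - a) := by rw [hlam2]; ring

end Helpers

/-- global existence under the smallness condition
`‖u₀‖_{L²}/(1 - ‖∇u₀‖²_{L²}) < √(π/κ)`. The maximal solution of the focusing NLS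
`i∂ₜu + Δu = -f_μ(u)`, `u(0) = u₀` (with conserved mass and energy, continuous `H¹` flow,
and the blow-up alternative) is global: `T* = ∞`. -/
theorem global_existence_small_data (μ : ℝ) (hμ : μ = 0 ∨ μ = 1) (κ : ℝ)
    (hκ : IsLUB {r : ℝ | ∃ v : E2 → ℂ, MemH1 v ∧ l2Sq v + gradSq v ≤ 1 ∧
        r = ∫ x : E2, (Real.exp (4 * π * ‖v x‖ ^ 2) - 1)} κ)
    (u₀ : E2 → ℂ) (h₀mem : MemH1 u₀) (h₀exp : ExpIntegrable u₀)
    (h₀grad : Real.sqrt (gradSq u₀) < 1)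
    (h₀small : Real.sqrt (l2Sq u₀) / (1 - gradSq u₀) < Real.sqrt (π / κ))
    -- the maximal solution on `[0, T*)`
    (Tstar : ℝ≥0∞) (hT : 0 < Tstar) (u : ℝ → E2 → ℂ) (hu0 : u 0 = u₀)
    (hmem : ∀ t : ℝ, 0 ≤ t → ENNReal.ofReal t < Tstar → MemH1 (u t) ∧ ExpIntegrable (u t))
    (hsol : ∀ t : ℝ, 0 ≤ t → ENNReal.ofReal t < Tstar → ∀ x : E2,
      Complex.I * deriv (fun s => u s x) t + lap (u t) x = -(fmu μ (u t x)))
    (hmass : ∀ t : ℝ, 0 ≤ t → ENNReal.ofReal t < Tstar → l2Sq (u t) = l2Sq u₀)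
    (henergy : ∀ t : ℝ, 0 ≤ t → ENNReal.ofReal t < Tstar → Emu μ (u t) = Emu μ u₀)
    -- continuity of the flow in `H¹`
    (hcont : ContinuousOn (fun t => gradSq (u t))
      {t : ℝ | 0 ≤ t ∧ ENNReal.ofReal t < Tstar})
    -- the blow-up alternative
    (halt : Tstar ≠ ⊤ →
      Filter.limsup (fun t => Real.sqrt (gradSq (u t))) (𝓝[<] Tstar.toReal) = 1) :
    Tstar = ⊤ := by
  by_contra hTne
  have hπ : (0:ℝ) < π := Real.pi_pos
  have ha₀0 : 0 ≤ gradSq u₀ := integral_nonneg fun x => by positivity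
  have hm0 : 0 ≤ l2Sq u₀ := integral_nonneg fun x => by positivity
  set a₀ := gradSq u₀ with ha₀def
  set m := l2Sq u₀ with hmdef
  have ha₀1 : a₀ < 1 := by
    nlinarith [Real.sq_sqrt ha₀0, Real.sqrt_nonneg a₀, h₀grad]
  have hκpos : 0 < κ := by
    by_contra hk
    push_neg at hk
    have h1 : π / κ ≤ 0 := by
      rcases hk.lt_or_eq with h | h
      · exact (div_neg_of_pos_of_neg hπ h).le
      · simp [h]
    have h2 : Real.sqrt (π / κ) = 0 := Real.sqrt_eq_zero'.mpr h1
    have h3 : 0 ≤ Real.sqrt m / (1 - a₀) :=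
      div_nonneg (Real.sqrt_nonneg m) (by linarith)
    rw [h2] at h₀small
    linarith
  have hκm : κ * m < π * (1 - a₀) ^ 2 := by
    have h1 : (Real.sqrt m / (1 - a₀)) ^ 2 < (Real.sqrt (π / κ)) ^ 2 :=
      pow_lt_pow_left₀ h₀small (div_nonneg (Real.sqrt_nonneg m) (by linarith)) two_ne_zero
    rw [div_pow, Real.sq_sqrt hm0, Real.sq_sqrt (div_pos hπ hκpos).le,
      div_lt_div_iff₀ (pow_pos (by linarith) 2) hκpos] at h1
    nlinarith
  have hT0 : 0 < Tstar.toReal := ENNReal.toReal_pos hT.ne' hTne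
  set T := Tstar.toReal with hTdef
  set c : ℝ := (1 + a₀) / 2 with hc
  have hca : a₀ < c := by rw [hc]; linarith
  have hc1 : c < 1 := by rw [hc]; linarith
  have hc0 : 0 ≤ c := by rw [hc]; linarith
  have h1c : 0 < 1 - c := by linarith
  -- the key quantitative step: the gradient can never equal `c`
  have key : ∀ s : ℝ, 0 ≤ s → ENNReal.ofReal s < Tstar → gradSq (u s) ≠ c := by
    intro s hs0 hsT hgc
    obtain ⟨hmem_s, hexp_s⟩ := hmem s hs0 hsT
    have hmass_s := hmass s hs0 hsT
    have hE := henergy s hs0 hsT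
    set J := ∫ x : E2, (Real.exp (4 * π * ‖u s x‖ ^ 2) - 1) with hJdef
    have hJ : J ≤ κ * m / (1 - c) := by
      have h := tm_bound κ hκ (u s) hmem_s (by rw [hgc]; exact hc1)
      rwa [hmass_s, hgc] at h
    have hFs : (∫ x : E2, Fmu μ (u s x)) ≤ J / (8 * π) := by
      have hint : Integrable (fun x : E2 => (Real.exp (4 * π * ‖u s x‖ ^ 2) - 1) / (8 * π)) :=
        (hexp_s (4 * π) (by positivity)).div_const _
      have h := integral_mono_of_nonneg
        (Eventually.of_forall fun x => Fmu_nonneg hμ (u s x))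
        hint (Eventually.of_forall fun x => Fmu_le hμ (u s x))
      rwa [integral_div] at h
    have hF0 : 0 ≤ ∫ x : E2, Fmu μ (u₀ x) := integral_nonneg fun x => Fmu_nonneg hμ _
    unfold Emu at hE
    rw [hgc, ← ha₀def] at hE
    set Fs := ∫ x : E2, Fmu μ (u s x)
    set F0 := ∫ x : E2, Fmu μ (u₀ x)
    -- hE : c / 2 - Fs = a₀ / 2 - F0
    have h1 : c - a₀ ≤ 2 * Fs := by linarith
    have heq : 2 * (J / (8 * π)) = J / (4 * π) := by ring
    have h3 : c - a₀ ≤ J / (4 * π) := by linarith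
    have h4 : (c - a₀) * (4 * π) ≤ J := (le_div_iff₀ (by positivity)).mp h3
    have h5 : ((c - a₀) * (4 * π)) * (1 - c) ≤ κ * m :=
      (le_div_iff₀ h1c).mp (h4.trans hJ)
    have h6 : ((c - a₀) * (4 * π)) * (1 - c) = π * (1 - a₀) ^ 2 := by rw [hc]; ring
    linarith
  have hTeq : Tstar = ENNReal.ofReal T := (ENNReal.ofReal_toReal hTne).symm
  -- by continuity, the gradient stays below `c`
  have claim : ∀ t : ℝ, 0 ≤ t → ENNReal.ofReal t < Tstar → gradSq (u t) < c := by
    intro t ht0 htT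
    by_contra hge
    push_neg at hge
    have hsub : Set.Icc (0:ℝ) t ⊆ {t : ℝ | 0 ≤ t ∧ ENNReal.ofReal t < Tstar} :=
      fun s hs => ⟨hs.1, lt_of_le_of_lt (ENNReal.ofReal_le_ofReal hs.2) htT⟩
    have hIVT := intermediate_value_Icc ht0 (hcont.mono hsub)
    have hcmem : c ∈ Set.Icc (gradSq (u 0)) (gradSq (u t)) := by
      rw [hu0, ← ha₀def]; exact ⟨hca.le, hge⟩
    obtain ⟨s, hsmem, hgs⟩ := hIVT hcmem
    exact key s hsmem.1 (lt_of_le_of_lt (ENNReal.ofReal_le_ofReal hsmem.2) htT) hgs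
  -- contradiction with the blow-up alternative
  have hlim := halt hTne
  have hIoo : Set.Ioo (0:ℝ) T ∈ 𝓝[<] T := Ioo_mem_nhdsLT_of_mem ⟨hT0, le_refl T⟩
  have hev : ∀ᶠ t in 𝓝[<] T, Real.sqrt (gradSq (u t)) ≤ Real.sqrt c := by
    filter_upwards [hIoo] with t ht
    have htT : ENNReal.ofReal t < Tstar := by
      rw [hTeq]
      exact (ENNReal.ofReal_lt_ofReal_iff hT0).mpr ht.2
    exact Real.sqrt_le_sqrt (claim t ht.1.le htT).le
  have hcobdd : IsCoboundedUnder (· ≤ ·) (𝓝[<] T) (fun t => Real.sqrt (gradSq (u t))) :=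
    isCoboundedUnder_le_of_eventually_le _
      (Eventually.of_forall fun t => Real.sqrt_nonneg _)
  have hle : limsup (fun t => Real.sqrt (gradSq (u t))) (𝓝[<] T) ≤ Real.sqrt c :=
    limsup_le_of_le hcobdd hev
  rw [hlim] at hle
  have hlt : Real.sqrt c < 1 := (Real.sqrt_lt' one_pos).mpr (by rw [one_pow]; exact hc1)
  linarith
end
end

section
/- Let μ ∈ {0,1} and let u₀ ∈ 𝒜⁺_μ, i.e. u₀ ∈ H¹(ℝ²)∖{0} with S_μ(u₀) < S_μ(Q_μ) and P_μ(u₀) > 0. Then the corresponding maximal solution of the focusing NLS i∂_t u + Δu = −f_μ(u), u(0) = u₀, exists globally in time. -/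
open MeasureTheory Real Filter
open scoped Topology ENNReal

noncomputable section

/-- global existence for data in `𝒜⁺_μ`. If `u₀ ∈ H¹∖{0}` satisfies
`S_μ(u₀) < S_μ(Q_μ)` and `P_μ(u₀) > 0`, then the maximal solution of the focusing NLS
`i∂ₜu + Δu = -f_μ(u)`, `u(0) = u₀` is global: `T* = ∞`. -/
theorem global_existence_Aplus (μ : ℝ) (hμ : μ = 0 ∨ μ = 1)
    -- the ground state `Q_μ` and its properties
    (Q : E2 → ℂ) (hQ : IsGroundState μ Q)
    (hSQ : Smu μ Q = gradSq Q / 2) (hPQ : Pmu μ Q = 0)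
    (hPchar : IsLeast {s : ℝ | ∃ φ : E2 → ℂ, MemH1 φ ∧ ExpIntegrable φ ∧
        ¬ φ =ᵐ[volume] (0 : E2 → ℂ) ∧ Pmu μ φ = 0 ∧ s = Smu μ φ} (Smu μ Q))
    -- the initial datum `u₀ ∈ 𝒜⁺_μ`
    (u₀ : E2 → ℂ) (h₀mem : MemH1 u₀) (h₀exp : ExpIntegrable u₀)
    (h₀ne : ¬ u₀ =ᵐ[volume] (0 : E2 → ℂ))
    (h₀S : Smu μ u₀ < Smu μ Q) (h₀P : 0 < Pmu μ u₀)
    -- the maximal solution on `[0, T*)`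
    (Tstar : ℝ≥0∞) (hT : 0 < Tstar) (u : ℝ → E2 → ℂ) (hu0 : u 0 = u₀)
    (hmem : ∀ t : ℝ, 0 ≤ t → ENNReal.ofReal t < Tstar →
      MemH1 (u t) ∧ ExpIntegrable (u t) ∧ ¬ u t =ᵐ[volume] (0 : E2 → ℂ))
    (hsol : ∀ t : ℝ, 0 ≤ t → ENNReal.ofReal t < Tstar → ∀ x : E2,
      Complex.I * deriv (fun s => u s x) t + lap (u t) x = -(fmu μ (u t x)))
    (hmass : ∀ t : ℝ, 0 ≤ t → ENNReal.ofReal t < Tstar → l2Sq (u t) = l2Sq u₀)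
    (henergy : ∀ t : ℝ, 0 ≤ t → ENNReal.ofReal t < Tstar → Emu μ (u t) = Emu μ u₀)
    -- continuity of the flow in `H¹`
    (hcontg : ContinuousOn (fun t => gradSq (u t))
      {t : ℝ | 0 ≤ t ∧ ENNReal.ofReal t < Tstar})
    (hcontP : ContinuousOn (fun t => Pmu μ (u t))
      {t : ℝ | 0 ≤ t ∧ ENNReal.ofReal t < Tstar})
    -- the blow-up alternative
    (halt : Tstar ≠ ⊤ →
      Filter.limsup (fun t => Real.sqrt (gradSq (u t))) (𝓝[<] Tstar.toReal) = 1) :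
    Tstar = ⊤ := by
  by_contra hne
  have halt' := halt hne
  set T : ℝ := Tstar.toReal with hTdef
  have hTpos : 0 < T := ENNReal.toReal_pos hT.ne' hne
  -- conservation of the action
  have hS : ∀ t : ℝ, 0 ≤ t → ENNReal.ofReal t < Tstar → Smu μ (u t) = Smu μ u₀ := by
    intro t ht ht'
    unfold Smu
    rw [henergy t ht ht', hmass t ht ht']
  -- S = gradSq/2 + P
  have hSP : ∀ v : E2 → ℂ, Smu μ v = gradSq v / 2 + Pmu μ v := by
    intro v; unfold Smu Emu Pmu; ring
  -- P stays positive
  have hP : ∀ t : ℝ, 0 ≤ t → ENNReal.ofReal t < Tstar → 0 < Pmu μ (u t) := by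
    intro t ht ht'
    by_contra hPle
    push_neg at hPle
    have hsub : Set.Icc (0:ℝ) t ⊆ {s : ℝ | 0 ≤ s ∧ ENNReal.ofReal s < Tstar} := by
      intro s hs
      exact ⟨hs.1, lt_of_le_of_lt (ENNReal.ofReal_le_ofReal hs.2) ht'⟩
    have hcont1 : ContinuousOn (fun s => Pmu μ (u s)) (Set.Icc 0 t) :=
      hcontP.mono hsub
    have h0 : (0:ℝ) ∈ Set.Icc (Pmu μ (u t)) (Pmu μ (u 0)) := by
      rw [hu0]; exact ⟨hPle, le_of_lt h₀P⟩
    have := intermediate_value_Icc' ht hcont1 h0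
    obtain ⟨t₁, ht₁mem, ht₁⟩ := this
    have ht₁cond := hsub ht₁mem
    obtain ⟨hmem1, hexp1, hne1⟩ := hmem t₁ ht₁cond.1 ht₁cond.2
    have hQle : Smu μ Q ≤ Smu μ (u t₁) :=
      hPchar.2 ⟨u t₁, hmem1, hexp1, hne1, ht₁, rfl⟩
    have : Smu μ (u t₁) = Smu μ u₀ := hS t₁ ht₁cond.1 ht₁cond.2
    linarith [h₀S]
  -- gradient stays below gradSq Q
  have hg : ∀ t : ℝ, 0 ≤ t → ENNReal.ofReal t < Tstar → gradSq (u t) < gradSq Q := by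
    intro t ht ht'
    have h1 := hSP (u t)
    have h2 := hS t ht ht'
    have h3 := hP t ht ht'
    have h4 : Smu μ u₀ < gradSq Q / 2 := by rw [← hSQ]; exact h₀S
    linarith
  -- the uniform bound on sqrt(gradSq)
  set c : ℝ := Real.sqrt (gradSq Q) with hcdef
  have hclt1 : c < 1 := by
    rw [hcdef, Real.sqrt_lt' one_pos]
    simpa using hQ.grad_lt_one
  have hb : ∀ᶠ t in 𝓝[<] T, Real.sqrt (gradSq (u t)) ≤ c := by
    have hIoo : Set.Ioo (0:ℝ) T ∈ 𝓝[<] T :=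
      Ioo_mem_nhdsLT_of_mem ⟨hTpos, le_refl T⟩
    filter_upwards [hIoo] with t ht
    have ht0 : 0 ≤ t := le_of_lt ht.1
    have ht' : ENNReal.ofReal t < Tstar := by
      have := (ENNReal.ofReal_lt_ofReal_iff hTpos).mpr ht.2
      rwa [hTdef, ENNReal.ofReal_toReal hne] at this
    exact Real.sqrt_le_sqrt (le_of_lt (hg t ht0 ht'))
  haveI : (𝓝[<] T).NeBot := nhdsLT_neBot T
  have hlim : Filter.limsup (fun t => Real.sqrt (gradSq (u t))) (𝓝[<] T) ≤ c :=
    Filter.limsup_le_of_le (Filter.isCoboundedUnder_le_of_le _ (fun t => Real.sqrt_nonneg _)) hb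
  rw [halt'] at hlim
  linarith
end
end

section
/- Let μ ∈ {0,1} and let u₀ ∈ H¹(ℝ²) ∩ L²(|x|² dx) satisfy ‖∇u₀‖_{L²} < 1 and E_μ(u₀) < 0. Then the corresponding maximal solution of the focusing NLS i∂_t u + Δu = −f_μ(u), u(0) = u₀, blows up in finite time. -/
open MeasureTheory Real Filter
open scoped Topology ENNReal

noncomputable section

lemma aux_h_nonneg {s : ℝ} (hs : 0 ≤ s) : 0 ≤ (s - 2) * Real.exp s + s + 2 := by
  have hder : ∀ x : ℝ, HasDerivAt (fun y => (y - 2) * Real.exp y + y + 2)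
      ((x - 1) * Real.exp x + 1) x := by
    intro x
    have h1 : HasDerivAt (fun y : ℝ => (y - 2) * Real.exp y)
        (1 * Real.exp x + (x - 2) * Real.exp x) x :=
      ((hasDerivAt_id x).sub_const 2).mul (Real.hasDerivAt_exp x)
    have h2 := (h1.add (hasDerivAt_id x)).add_const 2
    exact h2.congr_deriv (by ring)
  have hmono : Monotone (fun y : ℝ => (y - 2) * Real.exp y + y + 2) := by
    apply monotone_of_deriv_nonneg
    · exact fun x => (hder x).differentiableAt
    · intro x
      rw [(hder x).deriv]
      have h1 : Real.exp (-x) * Real.exp x = 1 := by rw [← Real.exp_add]; simp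
      nlinarith [mul_le_mul_of_nonneg_right (Real.add_one_le_exp (-x)) (Real.exp_pos x).le, h1]
  have := hmono hs
  simpa using this

lemma four_Fmu_le_nl (μ : ℝ) (z : ℂ) : 4 * Fmu μ z ≤ nlDensity μ z := by
  have hπ : (0:ℝ) < π := Real.pi_pos
  have hr : (0:ℝ) ≤ ‖z‖ ^ 2 := by positivity
  have hh := aux_h_nonneg (s := 4 * π * ‖z‖ ^ 2) (by positivity)
  rw [Fmu, nlDensity, ← mul_div_assoc, div_le_iff₀ (by positivity : (0:ℝ) < 8 * π)]
  nlinarith [hh, hπ, hr]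

lemma sq_half_le_expm1 {x : ℝ} (hx : 0 ≤ x) : x ^ 2 ≤ 2 * (Real.exp x - 1) := by
  nlinarith [Real.quadratic_le_exp_of_nonneg hx]

-- Integrability of Fmu ∘ v
lemma integrable_Fmu (μ : ℝ) (v : E2 → ℂ) (hc : Continuous v)
    (hL2 : MemLp v 2 volume) (hve : ExpIntegrable v) :
    Integrable (fun x => Fmu μ (v x)) := by
  have hπ : (0:ℝ) < π := Real.pi_pos
  have I1 := (hve (4 * π) (by positivity)).const_mul (1 / (8 * π))
  have I2 : Integrable (fun x : E2 => ‖v x‖ ^ 2) := by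
    have := hL2.integrable_norm_rpow two_ne_zero ENNReal.ofNat_ne_top
    simpa [ENNReal.toReal_ofNat, Real.rpow_natCast] using this
  have I3 : Integrable (fun x : E2 => ‖v x‖ ^ 4) := by
    apply Integrable.mono' ((hve (4 * π) (by positivity)).const_mul (1 / (8 * π ^ 2)))
    · exact (Continuous.aestronglyMeasurable (by fun_prop))
    · filter_upwards with x
      have hr : (0:ℝ) ≤ ‖v x‖ ^ 2 := by positivity
      have := sq_half_le_expm1 (x := 4 * π * ‖v x‖ ^ 2) (by positivity)
      rw [Real.norm_eq_abs, abs_of_nonneg (by positivity)]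
      have h4 : ‖v x‖ ^ 4 = (‖v x‖ ^ 2) ^ 2 := by ring
      rw [h4]
      rw [div_mul_eq_mul_div, le_div_iff₀ (by positivity : (0:ℝ) < 8 * π ^ 2)]
      nlinarith [hπ]
    
  have heq : (fun x => Fmu μ (v x)) = fun x =>
      (1 / (8 * π)) * (Real.exp (4 * π * ‖v x‖ ^ 2) - 1)
      - (1 / 2) * ‖v x‖ ^ 2 - (π * μ) * ‖v x‖ ^ 4 := by
    funext x; rw [Fmu]; field_simp; ring
  rw [heq]
  exact (I1.sub (I2.const_mul _)).sub (I3.const_mul _)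

-- Integrability of nlDensity ∘ v (μ ∈ [0,1])
lemma integrable_nl (μ : ℝ) (hμ0 : 0 ≤ μ) (hμ1 : μ ≤ 1) (v : E2 → ℂ) (hc : Continuous v)
    (hve : ExpIntegrable v) :
    Integrable (fun x => nlDensity μ (v x)) := by
  have hπ : (0:ℝ) < π := Real.pi_pos
  apply Integrable.mono' ((hve (8 * π) (by positivity)).const_mul (1 / (4 * π)))
  · refine Continuous.aestronglyMeasurable ?_
    unfold nlDensity
    fun_prop
  · filter_upwards with x
    set s : ℝ := 4 * π * ‖v x‖ ^ 2 with hsdef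
    have hs : 0 ≤ s := by positivity
    have he1 : s + 1 ≤ Real.exp s := Real.add_one_le_exp s
    have he2 : Real.exp (2 * s) = Real.exp s * Real.exp s := by
      rw [two_mul, Real.exp_add]
    have hnl : nlDensity μ (v x) = (Real.exp s - 1 - μ * s) * (s / (4 * π)) := by
      have hs4 : s / (4 * π) = ‖v x‖ ^ 2 := by
        rw [hsdef]; field_simp
      rw [hs4, nlDensity, hsdef]; ring
    have hb : 0 ≤ Real.exp s - 1 - μ * s ∧ Real.exp s - 1 - μ * s ≤ Real.exp s - 1 := by
      constructor
      · nlinarith [mul_le_mul_of_nonneg_right hμ1 hs]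
      · nlinarith [mul_nonneg hμ0 hs]
    have hpos : 0 ≤ (Real.exp s - 1 - μ * s) * (s / (4 * π)) :=
      mul_nonneg hb.1 (by positivity)
    rw [hnl, Real.norm_eq_abs, abs_of_nonneg hpos]
    have h2s : 8 * π * ‖v x‖ ^ 2 = 2 * s := by rw [hsdef]; ring
    rw [h2s]
    have hE1 : 1 ≤ Real.exp s := Real.one_le_exp hs
    rw [show (Real.exp s - 1 - μ * s) * (s / (4 * π))
        = ((Real.exp s - 1 - μ * s) * s) / (4 * π) from by ring,
      show (1:ℝ) / (4 * π) * (Real.exp (2 * s) - 1)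
        = (Real.exp (2 * s) - 1) / (4 * π) from by ring,
      div_le_div_iff_of_pos_right (by positivity : (0:ℝ) < 4 * π)]
    nlinarith [mul_le_mul hb.2 (by linarith : s ≤ Real.exp s - 1) hs
        (by linarith : (0:ℝ) ≤ Real.exp s - 1), he2, hE1]
/-- finite time blow-up for negative energy data of finite variance.
If `u₀ ∈ H¹(ℝ²) ∩ L²(|x|²dx)` with `‖∇u₀‖_{L²} < 1` and `E_μ(u₀) < 0`, then the maximal
solution of `i∂ₜu + Δu = -f_μ(u)`, `u(0) = u₀` (which stays in `Σ` and satisfies the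
virial identity `(d²/dt²)‖xu(t)‖²_{L²} = 8 I_μ(u(t))`) blows up in finite time. -/
theorem blowup_negative_energy (μ : ℝ) (hμ : μ = 0 ∨ μ = 1)
    (u₀ : E2 → ℂ) (h₀mem : MemH1 u₀) (h₀exp : ExpIntegrable u₀)
    (h₀var : Integrable (fun x : E2 => ‖x‖ ^ 2 * ‖u₀ x‖ ^ 2))
    (h₀grad : Real.sqrt (gradSq u₀) < 1) (h₀E : Emu μ u₀ < 0)
    -- the maximal solution on `[0, T*)`
    (Tstar : ℝ≥0∞) (hT : 0 < Tstar) (u : ℝ → E2 → ℂ) (hu0 : u 0 = u₀)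
    (hmem : ∀ t : ℝ, 0 ≤ t → ENNReal.ofReal t < Tstar → MemH1 (u t) ∧ ExpIntegrable (u t))
    (hsol : ∀ t : ℝ, 0 ≤ t → ENNReal.ofReal t < Tstar → ∀ x : E2,
      Complex.I * deriv (fun s => u s x) t + lap (u t) x = -(fmu μ (u t x)))
    (hmass : ∀ t : ℝ, 0 ≤ t → ENNReal.ofReal t < Tstar → l2Sq (u t) = l2Sq u₀)
    (henergy : ∀ t : ℝ, 0 ≤ t → ENNReal.ofReal t < Tstar → Emu μ (u t) = Emu μ u₀)
    -- persistence of finite variance and the virial identity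
    (hvar : ∀ t : ℝ, 0 ≤ t → ENNReal.ofReal t < Tstar →
      Integrable (fun x : E2 => ‖x‖ ^ 2 * ‖u t x‖ ^ 2))
    (V' : ℝ → ℝ)
    (hV₁ : ∀ t : ℝ, 0 ≤ t → ENNReal.ofReal t < Tstar →
      HasDerivAt (fun s => ∫ x : E2, ‖x‖ ^ 2 * ‖u s x‖ ^ 2) (V' t) t)
    (hV₂ : ∀ t : ℝ, 0 ≤ t → ENNReal.ofReal t < Tstar →
      HasDerivAt V' (8 * Imu μ (u t)) t)
    -- the blow-up alternative
    (halt : Tstar ≠ ⊤ →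
      Filter.limsup (fun t => Real.sqrt (gradSq (u t))) (𝓝[<] Tstar.toReal) = 1) :
    Tstar < ⊤ := by
  by_contra hlt
  have htop : Tstar = ⊤ := top_le_iff.mp (not_lt.mp hlt)
  have hall : ∀ t : ℝ, ENNReal.ofReal t < Tstar := fun t => htop ▸ ENNReal.ofReal_lt_top
  obtain ⟨hμ0, hμ1⟩ : 0 ≤ μ ∧ μ ≤ 1 := by rcases hμ with h | h <;> simp [h]
  set E : ℝ := Emu μ u₀ with hEdef
  have hEneg : E < 0 := h₀E
  -- the virial functional is bounded by twice the (negative) energy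
  have hI : ∀ t : ℝ, 0 ≤ t → Imu μ (u t) ≤ 2 * E := by
    intro t ht
    obtain ⟨⟨hL2, hdiff, -⟩, hexp⟩ := hmem t ht (hall t)
    have hen : Emu μ (u t) = E := henergy t ht (hall t)
    have hF := integrable_Fmu μ (u t) hdiff.continuous hL2 hexp
    have hN := integrable_nl μ hμ0 hμ1 (u t) hdiff.continuous hexp
    have hsplit : ∫ x : E2, (nlDensity μ (u t x) - 2 * Fmu μ (u t x))
        = (∫ x : E2, nlDensity μ (u t x)) - 2 * ∫ x : E2, Fmu μ (u t x) := by
      rw [integral_sub hN (hF.const_mul 2), integral_const_mul]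
    have hmono : (∫ x : E2, 4 * Fmu μ (u t x)) ≤ ∫ x : E2, nlDensity μ (u t x) :=
      integral_mono (hF.const_mul 4) hN (fun x => four_Fmu_le_nl μ (u t x))
    rw [integral_const_mul] at hmono
    have hImu : Imu μ (u t) = gradSq (u t)
        - ((∫ x : E2, nlDensity μ (u t x)) - 2 * ∫ x : E2, Fmu μ (u t x)) := by
      rw [Imu, hsplit]
    have hE2 : 2 * E = gradSq (u t) - 2 * ∫ x : E2, Fmu μ (u t x) := by
      rw [Emu] at hen; linarith
    rw [hImu, hE2]; linarith
  set V : ℝ → ℝ := fun s => ∫ x : E2, ‖x‖ ^ 2 * ‖u s x‖ ^ 2 with hVdef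
  have hVnonneg : ∀ t : ℝ, 0 ≤ V t := by
    intro t
    simp only [hVdef]
    exact integral_nonneg (fun x => by positivity)
  -- first comparison: V' t ≤ V' 0 + 16 E t
  have hg' : ∀ t : ℝ, 0 ≤ t → HasDerivAt (fun s => V' s - 16 * E * s)
      (8 * Imu μ (u t) - 16 * E) t := by
    intro t ht
    have h1 := (hV₂ t ht (hall t)).sub ((hasDerivAt_id t).const_mul (16 * E))
    exact h1.congr_deriv (by ring)
  have hanti1 : AntitoneOn (fun s => V' s - 16 * E * s) (Set.Ici 0) := by
    apply antitoneOn_of_deriv_nonpos (convex_Ici 0)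
    · exact fun t ht => (hg' t ht).continuousAt.continuousWithinAt
    · intro t ht
      rw [interior_Ici] at ht
      exact (hg' t ht.le).differentiableAt.differentiableWithinAt
    · intro t ht
      rw [interior_Ici] at ht
      rw [(hg' t ht.le).deriv]
      have := hI t ht.le
      linarith
  have hV'le : ∀ t : ℝ, 0 ≤ t → V' t ≤ V' 0 + 16 * E * t := by
    intro t ht
    have := hanti1 Set.self_mem_Ici ht ht
    simp only [mul_zero] at this
    linarith
  -- second comparison: V t ≤ V 0 + V' 0 t + 8 E t²
  have hh' : ∀ t : ℝ, 0 ≤ t → HasDerivAt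
      (fun s => V s - V 0 - V' 0 * s - 8 * E * s ^ 2)
      (V' t - V' 0 - 16 * E * t) t := by
    intro t ht
    have h1 := (((hV₁ t ht (hall t)).sub_const (V 0)).sub
        ((hasDerivAt_id t).const_mul (V' 0))).sub
        ((hasDerivAt_pow 2 t).const_mul (8 * E))
    exact h1.congr_deriv (by push_cast; ring)
  have hanti2 : AntitoneOn (fun s => V s - V 0 - V' 0 * s - 8 * E * s ^ 2) (Set.Ici 0) := by
    apply antitoneOn_of_deriv_nonpos (convex_Ici 0)
    · exact fun t ht => (hh' t ht).continuousAt.continuousWithinAt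
    · intro t ht
      rw [interior_Ici] at ht
      exact (hh' t ht.le).differentiableAt.differentiableWithinAt
    · intro t ht
      rw [interior_Ici] at ht
      rw [(hh' t ht.le).deriv]
      have := hV'le t ht.le
      linarith
  have hVle : ∀ t : ℝ, 0 ≤ t → V t ≤ V 0 + V' 0 * t + 8 * E * t ^ 2 := by
    intro t ht
    have := hanti2 Set.self_mem_Ici ht ht
    norm_num at this
    linarith
  -- contradiction: evaluate at a large time
  set t₀ : ℝ := max 1 ((|V 0| + |V' 0| + 1) / (-(8 * E))) with ht₀def
  have hA : (0:ℝ) < -(8 * E) := by linarith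
  have ht1 : (1:ℝ) ≤ t₀ := le_max_left _ _
  have ht0 : (0:ℝ) ≤ t₀ := by linarith
  have hAt : |V 0| + |V' 0| + 1 ≤ -(8 * E) * t₀ := by
    have h := le_max_right 1 ((|V 0| + |V' 0| + 1) / (-(8 * E)))
    calc |V 0| + |V' 0| + 1 = (|V 0| + |V' 0| + 1) / (-(8 * E)) * (-(8 * E)) :=
          (div_mul_cancel₀ _ hA.ne').symm
      _ ≤ t₀ * (-(8 * E)) := mul_le_mul_of_nonneg_right h hA.le
      _ = -(8 * E) * t₀ := mul_comm _ _
  have hb := hVle t₀ ht0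
  have h0 := hVnonneg t₀
  nlinarith [mul_le_mul_of_nonneg_right hAt ht0,
    mul_le_mul_of_nonneg_left ht1 (abs_nonneg (V 0)),
    mul_le_mul_of_nonneg_right (le_abs_self (V' 0)) ht0,
    le_abs_self (V 0), ht1, hEneg]
end
end

section
/- Let μ ∈ {0,1}, φ ∈ H¹(ℝ²)∖{0}, and set φ_λ(x) := λ φ(λx) for λ > 0. Then: (i) ∂_λ S_μ(φ_λ) = I_μ(φ_λ)/λ; (ii) I_μ(φ_λ) = λ² Φ_μ(λ), where Φ_μ(λ) := ‖∇φ‖²_{L²} − ∫ 4π|φ|⁴ k_μ(4πλ²|φ|²) dx with k_μ(s) := s^{−1}e^s − s^{−2}e^s + s^{−2} − μ/2, and λ ↦ Φ_μ(λ) is strictly decreasing on (0,∞) with lim_{λ→0} Φ_μ(λ) = ‖∇φ‖²_{L²} − 2π(1−μ)‖φ‖⁴_{L⁴}. In particular, if Φ_μ(λ_μ) = 0 for some λ_μ > 0, then λ_μ is unique and λ ↦ S_μ(φ_λ) attains a strict maximum at λ_μ. -/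
open MeasureTheory Real Filter
open scoped Topology ENNReal

noncomputable section

/-- The scaling `φ_λ(x) = λ φ(λx)`. -/
def scl (l : ℝ) (φ : E2 → ℂ) : E2 → ℂ := fun x => (l : ℂ) * φ (l • x)

/-- The function `k_μ(s) = s⁻¹ e^s - s⁻² e^s + s⁻² - μ/2`. -/
def kmu (μ s : ℝ) : ℝ := s⁻¹ * Real.exp s - (s ^ 2)⁻¹ * Real.exp s + (s ^ 2)⁻¹ - μ / 2

/-- `Φ_μ(λ) = ‖∇φ‖² - ∫ 4π|φ|⁴ k_μ(4πλ²|φ|²)`. -/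
def Phi (μ : ℝ) (φ : E2 → ℂ) (l : ℝ) : ℝ :=
  gradSq φ - ∫ x : E2, 4 * π * ‖φ x‖ ^ 4 * kmu μ (4 * π * l ^ 2 * ‖φ x‖ ^ 2)

noncomputable section

-- basic inequalities
lemma aux_sq_le (s : ℝ) (hs : 0 ≤ s) : s^2 ≤ 4*(Real.exp s - 1) := by
  have h : Real.exp s = Real.exp (s/2) * Real.exp (s/2) := by
    rw [← Real.exp_add]; ring_nf
  nlinarith [Real.add_one_le_exp (s/2), Real.exp_pos (s/2)]

lemma aux_mul_exp_le (a s : ℝ) (ha : 0 ≤ a) (hs : 0 ≤ s) :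
    s * Real.exp (a*s) ≤ Real.exp ((a+1)*s) - 1 := by
  have h : Real.exp ((a+1)*s) = Real.exp (a*s) * Real.exp s := by
    rw [← Real.exp_add]; ring_nf
  nlinarith [Real.add_one_le_exp s, Real.one_le_exp (mul_nonneg ha hs), Real.exp_pos (a*s)]

lemma aux_sq_mul_exp_le (a s : ℝ) (ha : 0 ≤ a) (hs : 0 ≤ s) :
    s^2 * Real.exp (a*s) ≤ 4*(Real.exp ((a+1)*s) - 1) := by
  have h : Real.exp ((a+1)*s) = Real.exp (a*s) * Real.exp s := by
    rw [← Real.exp_add]; ring_nf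
  nlinarith [aux_sq_le s hs, Real.one_le_exp (mul_nonneg ha hs), Real.exp_pos (a*s), sq_nonneg s]

-- q s = exp s * (s^2 - 2s + 2) - 2 is positive on s > 0
lemma aux_q_pos {s : ℝ} (hs : 0 < s) : 0 < Real.exp s * (s^2 - 2*s + 2) - 2 := by
  have key : StrictMonoOn (fun s : ℝ => Real.exp s * (s^2 - 2*s + 2) - 2) (Set.Ici 0) := by
    have hd : ∀ x : ℝ, HasDerivAt (fun s : ℝ => Real.exp s * (s^2 - 2*s + 2) - 2)
        (Real.exp x * x^2) x := by
      intro x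
      have h1 : HasDerivAt (fun s : ℝ => s^2 - 2*s + 2) (2*x - 2) x := by
        have := ((hasDerivAt_pow 2 x).sub ((hasDerivAt_id x).const_mul 2)).add_const 2
        convert this using 1 <;> first | rfl | ring
      have := (Real.hasDerivAt_exp x).mul h1
      convert this.sub_const 2 using 1 <;> first | rfl | ring
    apply strictMonoOn_of_deriv_pos (convex_Ici 0)
    · exact fun x _ => (hd x).continuousAt.continuousWithinAt
    · intro x hx
      rw [interior_Ici] at hx
      rw [(hd x).deriv]
      exact mul_pos (Real.exp_pos x) (pow_pos hx 2)
  have := key (Set.self_mem_Ici) (Set.mem_Ici.mpr hs.le) hs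
  simpa using this

lemma aux_p_pos {s : ℝ} (hs : 0 < s) : 0 < Real.exp s * (s - 1) + 1 := by
  have key : StrictMonoOn (fun s : ℝ => Real.exp s * (s - 1) + 1) (Set.Ici 0) := by
    have hd : ∀ x : ℝ, HasDerivAt (fun s : ℝ => Real.exp s * (s - 1) + 1)
        (Real.exp x * x) x := by
      intro x
      have h1 : HasDerivAt (fun s : ℝ => s - 1) 1 x := (hasDerivAt_id x).sub_const 1
      have := ((Real.hasDerivAt_exp x).mul h1).add_const 1
      convert this using 1 <;> first | rfl | ring
    apply strictMonoOn_of_deriv_pos (convex_Ici 0)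
    · exact fun x _ => (hd x).continuousAt.continuousWithinAt
    · intro x hx
      rw [interior_Ici] at hx
      rw [(hd x).deriv]
      exact mul_pos (Real.exp_pos x) hx
  have := key (Set.self_mem_Ici) (Set.mem_Ici.mpr hs.le) hs
  simpa using this

lemma kmu_hasDerivAt (μ : ℝ) {s : ℝ} (hs : 0 < s) :
    HasDerivAt (kmu μ) ((s^3)⁻¹ * (Real.exp s * (s^2 - 2*s + 2) - 2)) s := by
  have hne : s ≠ 0 := hs.ne'
  have h1 : HasDerivAt (fun s : ℝ => s⁻¹ * Real.exp s)
      (-(s^2)⁻¹ * Real.exp s + s⁻¹ * Real.exp s) s := by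
    have := (hasDerivAt_inv hne).mul (Real.hasDerivAt_exp s)
    convert this using 1 <;> first | rfl | ring
  have h2 : HasDerivAt (fun s : ℝ => (s^2)⁻¹) (-(2*s) / (s^2)^2) s := by
    have := (hasDerivAt_pow 2 s).inv (pow_ne_zero 2 hne)
    convert this using 1 <;> first | rfl | ring
  have h3 : HasDerivAt (fun s : ℝ => (s^2)⁻¹ * Real.exp s)
      ((-(2*s) / (s^2)^2) * Real.exp s + (s^2)⁻¹ * Real.exp s) s := h2.mul (Real.hasDerivAt_exp s)
  have := ((h1.sub h3).add h2).sub_const (μ/2)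
  convert this using 1 <;> try rfl
  field_simp
  ring

lemma kmu_strictMonoOn (μ : ℝ) : StrictMonoOn (kmu μ) (Set.Ioi 0) := by
  apply strictMonoOn_of_deriv_pos (convex_Ioi 0)
  · exact fun x hx => (kmu_hasDerivAt μ hx).continuousAt.continuousWithinAt
  · intro x hx
    rw [interior_Ioi] at hx
    rw [(kmu_hasDerivAt μ hx).deriv]
    exact mul_pos (inv_pos.mpr (pow_pos hx 3)) (aux_q_pos hx)

lemma kmu_eq {μ s : ℝ} (hs : 0 < s) :
    kmu μ s = (Real.exp s * (s - 1) + 1) / s^2 - μ/2 := by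
  unfold kmu
  field_simp

lemma kmu_add_half_pos {μ s : ℝ} (hs : 0 < s) : 0 < kmu μ s + μ/2 := by
  have h : kmu μ s + μ/2 = (Real.exp s * (s - 1) + 1) / s^2 := by rw [kmu_eq hs]; ring
  rw [h]
  exact div_pos (aux_p_pos hs) (pow_pos hs 2)

lemma kmu_tendsto (μ : ℝ) : Tendsto (kmu μ) (𝓝[>] (0:ℝ)) (𝓝 (1/2 - μ/2)) := by
  have hp : Tendsto (fun s : ℝ => (Real.exp s * (s - 1) + 1) / s^2) (𝓝[>] (0:ℝ)) (𝓝 (1/2)) := by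
    apply HasDerivAt.lhopital_zero_right_on_Ioo (f' := fun s => Real.exp s * s)
      (g' := fun s => 2*s) (zero_lt_one)
    · intro x _
      have h1 : HasDerivAt (fun s : ℝ => s - 1) 1 x := (hasDerivAt_id x).sub_const 1
      have := ((Real.hasDerivAt_exp x).mul h1).add_const 1
      convert this using 1 <;> first | rfl | ring
    · intro x _
      have := hasDerivAt_pow 2 x
      convert this using 1 <;> first | rfl | ring
    · intro x hx; exact (mul_pos two_pos hx.1).ne'
    · have : Tendsto (fun s : ℝ => Real.exp s * (s - 1) + 1) (𝓝 (0:ℝ)) (𝓝 (Real.exp 0 * (0-1) + 1)) := by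
        exact (Real.continuous_exp.continuousAt.mul (continuousAt_id.sub continuousAt_const)).add continuousAt_const
      simp only [Real.exp_zero] at this
      have h0 : (1:ℝ) * (0 - 1) + 1 = 0 := by ring
      rw [h0] at this
      exact this.mono_left nhdsWithin_le_nhds
    · have : Tendsto (fun s : ℝ => s^2) (𝓝 (0:ℝ)) (𝓝 ((0:ℝ)^2)) := (continuous_pow 2).tendsto 0
      simp only [ne_eq, OfNat.ofNat_ne_zero, not_false_eq_true, zero_pow] at this
      exact this.mono_left nhdsWithin_le_nhds
    · have h1 : Tendsto (fun s : ℝ => Real.exp s / 2) (𝓝 (0:ℝ)) (𝓝 (1/2)) := by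
        have := Real.continuous_exp.tendsto 0
        rw [Real.exp_zero] at this
        exact this.div_const 2
      have h2 : Tendsto (fun s : ℝ => Real.exp s / 2) (𝓝[>] (0:ℝ)) (𝓝 (1/2)) :=
        h1.mono_left nhdsWithin_le_nhds
      apply h2.congr'
      filter_upwards [self_mem_nhdsWithin] with s hs
      have : s ≠ 0 := ne_of_gt hs
      field_simp
  have : Tendsto (fun s : ℝ => (Real.exp s * (s - 1) + 1) / s^2 - μ/2) (𝓝[>] (0:ℝ)) (𝓝 (1/2 - μ/2)) :=
    hp.sub_const (μ/2)
  apply this.congr'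
  filter_upwards [self_mem_nhdsWithin] with s hs
  exact (kmu_eq hs).symm
-- ALGEBRA
lemma norm_real_mul_sq (l : ℝ) (z : ℂ) : ‖(l:ℂ) * z‖^2 = l^2 * ‖z‖^2 := by
  rw [norm_mul, Complex.norm_real, mul_pow, Real.norm_eq_abs, sq_abs]

lemma norm_real_mul_pow4 (l : ℝ) (z : ℂ) : ‖(l:ℂ) * z‖^4 = l^4 * ‖z‖^4 := by
  have : ‖(l:ℂ) * z‖^4 = (‖(l:ℂ)*z‖^2)^2 := by ring
  rw [this, norm_real_mul_sq]; ring

lemma key_alg (μ l r : ℝ) (hl : l ≠ 0) (hr : 0 < r) :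
    (Real.exp (4*π*l^2*r) - 1 - 4*π*μ*(l^2*r)) * (l^2*r)
      - 2*((Real.exp (4*π*l^2*r) - 1 - 4*π*(l^2*r) - 8*π^2*μ*(l^4*r^2))/(8*π))
      = l^4*(4*π*r^2* kmu (μ) (4*π*l^2*r)) := by
  have hpi : (π:ℝ) ≠ 0 := Real.pi_ne_zero
  have hrn : r ≠ 0 := ne_of_gt hr
  unfold kmu
  field_simp
  ring

lemma nl_sub_two_F (μ : ℝ) {l : ℝ} (hl : l ≠ 0) (z : ℂ) :
    nlDensity μ ((l:ℂ)*z) - 2 * Fmu μ ((l:ℂ)*z)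
      = l^4 * (4*π*‖z‖^4 * kmu μ (4*π*l^2*‖z‖^2)) := by
  rcases eq_or_ne z 0 with rfl | hz
  · simp [nlDensity, Fmu, kmu]
  · have hr : (0:ℝ) < ‖z‖^2 := pow_pos (norm_pos_iff.mpr hz) 2
    unfold nlDensity Fmu
    rw [norm_real_mul_sq, norm_real_mul_pow4,
      show (4 * π * (l ^ 2 * ‖z‖ ^ 2)) = 4*π*l^2*‖z‖^2 from by ring]
    linear_combination key_alg μ l (‖z‖^2) hl hr
-- INTEGRABILITY TOOLKIT
section IntTools
variable {φ : E2 → ℂ}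

lemma aesm_sq (hm : AEStronglyMeasurable φ volume) :
    AEStronglyMeasurable (fun x => ‖φ x‖^2) volume :=
  (continuous_pow 2).comp_aestronglyMeasurable hm.norm

lemma int_sq (hφ : MemLp φ 2 volume) : Integrable (fun x => ‖φ x‖^2) volume :=
  (memLp_two_iff_integrable_sq_norm hφ.aestronglyMeasurable).1 hφ

lemma int_pow4 (hm : AEStronglyMeasurable φ volume) (hφexp : ExpIntegrable φ) :
    Integrable (fun x => ‖φ x‖^4) volume := by
  apply Integrable.mono' ((hφexp 1 one_pos).const_mul 4)
  · exact (continuous_pow 4).comp_aestronglyMeasurable hm.norm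
  · filter_upwards with x
    rw [Real.norm_eq_abs, abs_of_nonneg (by positivity)]
    calc ‖φ x‖^4 = (‖φ x‖^2)^2 := by ring
    _ ≤ 4*(Real.exp (‖φ x‖^2) - 1) := aux_sq_le _ (by positivity)
    _ = 4*(Real.exp (1*‖φ x‖^2) - 1) := by rw [one_mul]

lemma int_sq_exp (hm : AEStronglyMeasurable φ volume) (hφexp : ExpIntegrable φ)
    (a : ℝ) (ha : 0 ≤ a) :
    Integrable (fun x => ‖φ x‖^2 * Real.exp (a * ‖φ x‖^2)) volume := by
  apply Integrable.mono' (hφexp (a+1) (by linarith))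
  · exact (show Continuous (fun t : ℝ => t * Real.exp (a*t)) by fun_prop).comp_aestronglyMeasurable
      (aesm_sq hm)
  · filter_upwards with x
    rw [Real.norm_eq_abs, abs_of_nonneg (by positivity)]
    exact aux_mul_exp_le a _ ha (by positivity)

lemma int_pow4_exp (hm : AEStronglyMeasurable φ volume) (hφexp : ExpIntegrable φ)
    (a : ℝ) (ha : 0 ≤ a) :
    Integrable (fun x => ‖φ x‖^4 * Real.exp (a * ‖φ x‖^2)) volume := by
  apply Integrable.mono' ((hφexp (a+1) (by linarith)).const_mul 4)
  · exact (show Continuous (fun t : ℝ => t^4 * Real.exp (a*t^2)) by fun_prop).comp_aestronglyMeasurable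
      hm.norm
  · filter_upwards with x
    rw [Real.norm_eq_abs, abs_of_nonneg (by positivity)]
    calc ‖φ x‖^4 * Real.exp (a * ‖φ x‖^2) = (‖φ x‖^2)^2 * Real.exp (a * ‖φ x‖^2) := by ring
    _ ≤ 4*(Real.exp ((a+1)*‖φ x‖^2) - 1) := aux_sq_mul_exp_le a _ ha (by positivity)

lemma int_nl (hm : AEStronglyMeasurable φ volume) (hφ2 : MemLp φ 2 volume)
    (hφexp : ExpIntegrable φ) (μ c : ℝ) :
    Integrable (fun x => nlDensity μ ((c:ℂ) * φ x)) volume := by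
  have heq : (fun x => nlDensity μ ((c:ℂ)*φ x))
      = fun x => c^2*(‖φ x‖^2 * Real.exp ((4*π*c^2) * ‖φ x‖^2)) - c^2*‖φ x‖^2
          - (4*π*μ*c^4)*‖φ x‖^4 := by
    funext x
    unfold nlDensity
    rw [norm_real_mul_sq, show 4*π*(c^2*‖φ x‖^2) = (4*π*c^2)*‖φ x‖^2 from by ring]
    ring
  rw [heq]
  exact (((int_sq_exp hm hφexp (4*π*c^2) (by positivity)).const_mul (c^2)).sub
    ((int_sq hφ2).const_mul (c^2))).sub ((int_pow4 hm hφexp).const_mul (4*π*μ*c^4))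

lemma int_F (hm : AEStronglyMeasurable φ volume) (hφ2 : MemLp φ 2 volume)
    (hφexp : ExpIntegrable φ) (μ : ℝ) {c : ℝ} (hc : c ≠ 0) :
    Integrable (fun x => Fmu μ ((c:ℂ) * φ x)) volume := by
  have heq : (fun x => Fmu μ ((c:ℂ)*φ x))
      = fun x => ((Real.exp ((4*π*c^2)*‖φ x‖^2) - 1) - (4*π*c^2)*‖φ x‖^2
          - (8*π^2*μ*c^4)*‖φ x‖^4) / (8*π) := by
    funext x
    unfold Fmu
    rw [norm_real_mul_sq, norm_real_mul_pow4,
      show 4*π*(c^2*‖φ x‖^2) = (4*π*c^2)*‖φ x‖^2 from by ring]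
    ring
  rw [heq]
  exact (((hφexp (4*π*c^2) (by positivity)).sub ((int_sq hφ2).const_mul (4*π*c^2))).sub
    ((int_pow4 hm hφexp).const_mul (8*π^2*μ*c^4))).div_const (8*π)

end IntTools
-- SCALING
lemma integral_comp_smul_E2_s10 (f : E2 → ℝ) {l : ℝ} (hl : 0 < l) :
    ∫ x : E2, f (l • x) = (l^2)⁻¹ * ∫ x, f x := by
  rw [MeasureTheory.Measure.integral_comp_smul volume f l]
  have h2 : Module.finrank ℝ E2 = 2 := finrank_euclideanSpace_fin
  rw [h2, smul_eq_mul, abs_of_nonneg (by positivity)]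

lemma integral_comp_scl (G : ℂ → ℝ) (φ : E2 → ℂ) {l : ℝ} (hl : 0 < l) :
    ∫ x : E2, G (scl l φ x) = (l^2)⁻¹ * ∫ y : E2, G ((l:ℂ) * φ y) :=
  integral_comp_smul_E2_s10 (fun y => G ((l:ℂ) * φ y)) hl

lemma fderiv_scl (φ : E2 → ℂ) (hdiff : Differentiable ℝ φ) (l : ℝ) (x : E2) :
    fderiv ℝ (scl l φ) x = (l:ℂ) • (l • fderiv ℝ φ (l • x)) := by
  have h1 : HasFDerivAt (fun x : E2 => l • x) (l • ContinuousLinearMap.id ℝ E2) x :=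
    (hasFDerivAt_id x).const_smul l
  have h2 : HasFDerivAt (fun x : E2 => φ (l • x))
      ((fderiv ℝ φ (l • x)).comp (l • ContinuousLinearMap.id ℝ E2)) x :=
    ((hdiff (l • x)).hasFDerivAt).comp x h1
  have h3 := h2.const_mul (l:ℂ)
  have h4 : (fderiv ℝ φ (l • x)).comp (l • ContinuousLinearMap.id ℝ E2)
      = l • fderiv ℝ φ (l • x) := by
    ext v
    simp
  rw [← h4]
  exact h3.fderiv

lemma gradSq_scl (φ : E2 → ℂ) (hdiff : Differentiable ℝ φ) {l : ℝ} (hl : 0 < l) :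
    gradSq (scl l φ) = l^2 * gradSq φ := by
  unfold gradSq
  have h1 : ∀ x, ‖fderiv ℝ (scl l φ) x‖^2 = l^4 * ‖fderiv ℝ φ (l • x)‖^2 := by
    intro x
    rw [fderiv_scl φ hdiff l x, norm_smul (l:ℂ) (l • fderiv ℝ φ (l • x)),
      norm_smul l (fderiv ℝ φ (l • x))]
    rw [Complex.norm_real, Real.norm_eq_abs, abs_of_pos hl]
    ring
  simp_rw [h1]
  rw [MeasureTheory.integral_const_mul,
    integral_comp_smul_E2_s10 (fun y => ‖fderiv ℝ φ y‖^2) hl]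
  have : l ≠ 0 := hl.ne'
  field_simp

lemma l2Sq_scl (φ : E2 → ℂ) {l : ℝ} (hl : 0 < l) : l2Sq (scl l φ) = l2Sq φ := by
  unfold l2Sq
  have h1 : ∀ x, ‖scl l φ x‖^2 = l^2 * ‖φ (l • x)‖^2 := by
    intro x; exact norm_real_mul_sq l (φ (l • x))
  simp_rw [h1]
  rw [MeasureTheory.integral_const_mul, integral_comp_smul_E2_s10 (fun y => ‖φ y‖^2) hl]
  have : l ≠ 0 := hl.ne'
  field_simp
-- DERIVATIVE OF THE POTENTIAL TERM
lemma hasDerivAt_Fmu_comp (μ : ℝ) (z : ℂ) (l : ℝ) :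
    HasDerivAt (fun t : ℝ => Fmu μ ((t:ℂ) * z))
      (l * ‖z‖^2 * (Real.exp (4*π*l^2*‖z‖^2) - 1 - 4*π*μ*(l^2*‖z‖^2))) l := by
  have heq : (fun t : ℝ => Fmu μ ((t:ℂ) * z))
      = fun t => (Real.exp ((4*π*‖z‖^2)*t^2) - 1 - (4*π*‖z‖^2)*t^2
          - (8*π^2*μ*‖z‖^4)*t^4)/(8*π) := by
    funext t
    unfold Fmu
    rw [norm_real_mul_sq, norm_real_mul_pow4,
      show 4*π*(t^2*‖z‖^2) = (4*π*‖z‖^2)*t^2 from by ring]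
    ring
  have h2 : HasDerivAt (fun t : ℝ => t^2) (2*l) l := by simpa using hasDerivAt_pow 2 l
  have h4 : HasDerivAt (fun t : ℝ => t^4) (4*l^3) l := by simpa using hasDerivAt_pow 4 l
  have hexp : HasDerivAt (fun t : ℝ => Real.exp ((4*π*‖z‖^2)*t^2))
      (Real.exp ((4*π*‖z‖^2)*l^2) * ((4*π*‖z‖^2)*(2*l))) l := (h2.const_mul (4*π*‖z‖^2)).exp
  have total := (((hexp.sub_const 1).sub (h2.const_mul (4*π*‖z‖^2))).sub
    (h4.const_mul (8*π^2*μ*‖z‖^4))).div_const (8*π)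
  rw [heq]
  convert total using 1 <;> try rfl
  rw [show (4*π*‖z‖^2)*l^2 = 4*π*l^2*‖z‖^2 from by ring]
  have hpi : (π:ℝ) ≠ 0 := Real.pi_ne_zero
  field_simp
  ring

lemma nl_eq_mul_g (μ : ℝ) (l : ℝ) (z : ℂ) :
    nlDensity μ ((l:ℂ)*z)
      = l * (l * ‖z‖^2 * (Real.exp (4*π*l^2*‖z‖^2) - 1 - 4*π*μ*(l^2*‖z‖^2))) := by
  unfold nlDensity
  rw [norm_real_mul_sq, show 4*π*(l^2*‖z‖^2) = 4*π*l^2*‖z‖^2 from by ring]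
  ring

lemma hasDerivAt_intF (μ : ℝ) (hμ0 : 0 ≤ μ) (φ : E2 → ℂ)
    (hm : AEStronglyMeasurable φ volume) (hφ2 : MemLp φ 2 volume) (hφexp : ExpIntegrable φ)
    {l₀ : ℝ} (hl₀ : 0 < l₀) :
    HasDerivAt (fun l : ℝ => ∫ x : E2, Fmu μ ((l:ℂ) * φ x))
      (∫ x : E2, l₀ * ‖φ x‖^2 * (Real.exp (4*π*l₀^2*‖φ x‖^2) - 1
        - 4*π*μ*(l₀^2*‖φ x‖^2))) l₀ := by
  set L : ℝ := |l₀| + 1 with hL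
  have hL1 : 1 ≤ L := by have := abs_nonneg l₀; simp only [hL]; linarith
  have hL0 : 0 < L := lt_of_lt_of_le one_pos hL1
  have contF : Continuous (Fmu μ) := by unfold Fmu; fun_prop
  have key := hasDerivAt_integral_of_dominated_loc_of_deriv_le (μ := volume)
    (F := fun (l : ℝ) (x : E2) => Fmu μ ((l:ℂ) * φ x))
    (F' := fun (l : ℝ) (x : E2) => l * ‖φ x‖^2 * (Real.exp (4*π*l^2*‖φ x‖^2) - 1
        - 4*π*μ*(l^2*‖φ x‖^2)))
    (bound := fun x => L*(‖φ x‖^2 * Real.exp ((4*π*L^2) * ‖φ x‖^2)) + L*‖φ x‖^2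
        + (4*π*μ*L^3)*‖φ x‖^4)
    (x₀ := l₀) (s := Metric.ball l₀ 1) (Metric.ball_mem_nhds l₀ one_pos)
    ?_ ?_ ?_ ?_ ?_ ?_
  · exact key.2
  · exact Eventually.of_forall fun l =>
      contF.comp_aestronglyMeasurable (hm.const_mul (l:ℂ))
  · exact int_F hm hφ2 hφexp μ hl₀.ne'
  · exact (show Continuous (fun t : ℝ => l₀ * t * (Real.exp (4*π*l₀^2*t) - 1
      - 4*π*μ*(l₀^2*t))) by fun_prop).comp_aestronglyMeasurable (aesm_sq hm)
  · apply Eventually.of_forall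
    intro x l hl
    have hr : (0:ℝ) ≤ ‖φ x‖^2 := by positivity
    have hlL : |l| ≤ L := by
      have h1 := abs_sub_abs_le_abs_sub l l₀
      rw [Metric.mem_ball, Real.dist_eq] at hl
      simp only [hL]
      linarith
    have hsq : l^2 ≤ L^2 := by
      have := pow_le_pow_left₀ (abs_nonneg l) hlL 2
      rwa [sq_abs] at this
    have hE : Real.exp (4*π*l^2*‖φ x‖^2) ≤ Real.exp ((4*π*L^2)*‖φ x‖^2) := by
      apply Real.exp_le_exp.mpr
      calc 4*π*l^2*‖φ x‖^2 = (4*π*‖φ x‖^2)*l^2 := by ring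
        _ ≤ (4*π*‖φ x‖^2)*L^2 := mul_le_mul_of_nonneg_left hsq (by positivity)
        _ = (4*π*L^2)*‖φ x‖^2 := by ring
    have hm'' : 4*π*μ*(l^2*‖φ x‖^2) ≤ 4*π*μ*(L^2*‖φ x‖^2) := by
      have h0 : (0:ℝ) ≤ 4*π*μ*‖φ x‖^2 := by positivity
      calc 4*π*μ*(l^2*‖φ x‖^2) = (4*π*μ*‖φ x‖^2)*l^2 := by ring
        _ ≤ (4*π*μ*‖φ x‖^2)*L^2 := mul_le_mul_of_nonneg_left hsq h0
        _ = 4*π*μ*(L^2*‖φ x‖^2) := by ring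
    have habs : |Real.exp (4*π*l^2*‖φ x‖^2) - 1 - 4*π*μ*(l^2*‖φ x‖^2)|
        ≤ Real.exp ((4*π*L^2)*‖φ x‖^2) + 1 + 4*π*μ*(L^2*‖φ x‖^2) := by
      have hm' : 0 ≤ 4*π*μ*(l^2*‖φ x‖^2) := by positivity
      rw [abs_le]
      constructor
      · nlinarith [Real.exp_pos (4*π*l^2*‖φ x‖^2)]
      · nlinarith [Real.exp_pos (4*π*l^2*‖φ x‖^2)]
    rw [Real.norm_eq_abs, abs_mul, abs_mul, abs_of_nonneg hr]
    show _ ≤ L*(‖φ x‖^2 * Real.exp ((4*π*L^2) * ‖φ x‖^2)) + L*‖φ x‖^2 + (4*π*μ*L^3)*‖φ x‖^4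
    calc |l| * ‖φ x‖^2 * |Real.exp (4*π*l^2*‖φ x‖^2) - 1 - 4*π*μ*(l^2*‖φ x‖^2)|
        ≤ L * ‖φ x‖^2 * (Real.exp ((4*π*L^2)*‖φ x‖^2) + 1 + 4*π*μ*(L^2*‖φ x‖^2)) :=
          mul_le_mul (mul_le_mul_of_nonneg_right hlL hr) habs (abs_nonneg _) (by positivity)
      _ = L*(‖φ x‖^2 * Real.exp ((4*π*L^2)*‖φ x‖^2)) + L*‖φ x‖^2 + (4*π*μ*L^3)*‖φ x‖^4 := by
          ring
  · exact (((int_sq_exp hm hφexp (4*π*L^2) (by positivity)).const_mul L).add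
      ((int_sq hφ2).const_mul L)).add ((int_pow4 hm hφexp).const_mul (4*π*μ*L^3))
  · exact Eventually.of_forall fun x l _ => hasDerivAt_Fmu_comp μ (φ x) l

set_option maxHeartbeats 1000000 in
/-- properties of the fibering maps `λ ↦ S_μ(φ_λ)` and `λ ↦ I_μ(φ_λ)`. -/
theorem fibering_map_properties (μ : ℝ) (hμ : μ = 0 ∨ μ = 1)
    (φ : E2 → ℂ) (hφmem : MemH1 φ) (hφexp : ExpIntegrable φ)
    (hφne : ¬ φ =ᵐ[volume] (0 : E2 → ℂ)) :
    -- (i) `∂_λ S_μ(φ_λ) = I_μ(φ_λ)/λ`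
    (∀ l : ℝ, 0 < l →
      HasDerivAt (fun l' : ℝ => Smu μ (scl l' φ)) (Imu μ (scl l φ) / l) l) ∧
    -- (ii) `I_μ(φ_λ) = λ² Φ_μ(λ)`
    (∀ l : ℝ, 0 < l → Imu μ (scl l φ) = l ^ 2 * Phi μ φ l) ∧
    -- `Φ_μ` is strictly decreasing on `(0,∞)`
    StrictAntiOn (Phi μ φ) (Set.Ioi (0 : ℝ)) ∧
    -- `Φ_μ(0⁺) = ‖∇φ‖² - 2π(1-μ)‖φ‖⁴_{L⁴}`
    Filter.Tendsto (Phi μ φ) (𝓝[>] (0 : ℝ))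
      (𝓝 (gradSq φ - 2 * π * (1 - μ) * ∫ x : E2, ‖φ x‖ ^ 4)) ∧
    -- if `Φ_μ(λ_μ) = 0` then `λ_μ` is unique and `λ ↦ S_μ(φ_λ)` has a strict maximum there
    (∀ lm : ℝ, 0 < lm → Phi μ φ lm = 0 →
      (∀ l : ℝ, 0 < l → Phi μ φ l = 0 → l = lm) ∧
      (∀ l : ℝ, 0 < l → l ≠ lm → Smu μ (scl l φ) < Smu μ (scl lm φ))) := by

  obtain ⟨hφ2, hdiff, _⟩ := hφmem
  have hm : AEStronglyMeasurable φ volume := hφ2.aestronglyMeasurable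
  have hμ0 : 0 ≤ μ := by rcases hμ with rfl | rfl <;> norm_num
  -- notation
  set A : ℝ → ℝ := fun l => ∫ x : E2, Fmu μ ((l:ℂ) * φ x) with hA
  set N : ℝ → ℝ := fun l => ∫ x : E2, nlDensity μ ((l:ℂ) * φ x) with hN
  set H : ℝ → ℝ := fun l => ∫ x : E2, 4 * π * ‖φ x‖ ^ 4 * kmu μ (4 * π * l ^ 2 * ‖φ x‖ ^ 2)
    with hH
  -- value of S along the scaling
  have hSval : ∀ l : ℝ, 0 < l → Smu μ (scl l φ)
      = l^2/2 * gradSq φ + l2Sq φ/2 - (l^2)⁻¹ * A l := by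
    intro l hl
    simp only [Smu, Emu, hA]
    rw [gradSq_scl φ hdiff hl, l2Sq_scl φ hl, integral_comp_scl (Fmu μ) φ hl]
    ring
  -- splitting of the nonlinear integral
  have hsplit : ∀ l : ℝ, 0 < l →
      (∫ y : E2, (nlDensity μ ((l:ℂ) * φ y) - 2 * Fmu μ ((l:ℂ) * φ y))) = N l - 2 * A l := by
    intro l hl
    rw [integral_sub (int_nl hm hφ2 hφexp μ l) ((int_F hm hφ2 hφexp μ hl.ne').const_mul 2),
      MeasureTheory.integral_const_mul]
  -- N - 2A = l^4 * H
  have hNA : ∀ l : ℝ, 0 < l → N l - 2 * A l = l^4 * H l := by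
    intro l hl
    rw [← hsplit l hl]
    have : (∫ y : E2, (nlDensity μ ((l:ℂ) * φ y) - 2 * Fmu μ ((l:ℂ) * φ y)))
        = ∫ y : E2, l^4 * (4*π*‖φ y‖^4 * kmu μ (4*π*l^2*‖φ y‖^2)) := by
      apply integral_congr_ae
      filter_upwards with y
      exact nl_sub_two_F μ hl.ne' (φ y)
    rw [this, MeasureTheory.integral_const_mul]
  -- value of I along the scaling
  have hIval : ∀ l : ℝ, 0 < l → Imu μ (scl l φ)
      = l^2 * gradSq φ - (l^2)⁻¹ * (N l - 2 * A l) := by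
    intro l hl
    simp only [Imu]
    rw [gradSq_scl φ hdiff hl,
      integral_comp_scl (fun z => nlDensity μ z - 2 * Fmu μ z) φ hl, hsplit l hl]
  -- part (ii)
  have part2 : ∀ l : ℝ, 0 < l → Imu μ (scl l φ) = l ^ 2 * Phi μ φ l := by
    intro l hl
    rw [hIval l hl, hNA l hl]
    have hl' : l ≠ 0 := hl.ne'
    rw [show Phi μ φ l = gradSq φ - H l from rfl]
    field_simp
  -- part (i)
  have part1 : ∀ l : ℝ, 0 < l →
      HasDerivAt (fun l' : ℝ => Smu μ (scl l' φ)) (Imu μ (scl l φ) / l) l := by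
    intro l hl
    have hl' : l ≠ 0 := hl.ne'
    have hAder := hasDerivAt_intF μ hμ0 φ hm hφ2 hφexp hl
    have h1 : HasDerivAt (fun t : ℝ => t^2/2 * gradSq φ + l2Sq φ/2) (l * gradSq φ) l := by
      have := (((hasDerivAt_pow 2 l).div_const 2).mul_const (gradSq φ)).add_const (l2Sq φ/2)
      convert this using 1 <;> try rfl
      push_cast
      ring
    have hinv : HasDerivAt (fun t : ℝ => (t^2)⁻¹) (-(2*l)/l^4) l := by
      have := (hasDerivAt_pow 2 l).inv (pow_ne_zero 2 hl')
      convert this using 1 <;> try rfl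
      push_cast
      ring
    have h3 : HasDerivAt (fun t : ℝ => (t^2)⁻¹ * A t)
        ((-(2*l)/l^4) * A l + (l^2)⁻¹ * (∫ x : E2, l * ‖φ x‖^2 *
          (Real.exp (4*π*l^2*‖φ x‖^2) - 1 - 4*π*μ*(l^2*‖φ x‖^2)))) l := hinv.mul hAder
    have total := h1.sub h3
    have hev : (fun l' : ℝ => Smu μ (scl l' φ))
        =ᶠ[𝓝 l] fun t => t^2/2 * gradSq φ + l2Sq φ/2 - (t^2)⁻¹ * A t := by
      filter_upwards [isOpen_Ioi.mem_nhds (Set.mem_Ioi.mpr hl)] with t ht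
      exact hSval t ht
    have hgN : (∫ x : E2, l * ‖φ x‖^2 *
        (Real.exp (4*π*l^2*‖φ x‖^2) - 1 - 4*π*μ*(l^2*‖φ x‖^2))) = l⁻¹ * N l := by
      have hNeq : N l = ∫ x : E2, l * (l * ‖φ x‖^2 *
          (Real.exp (4*π*l^2*‖φ x‖^2) - 1 - 4*π*μ*(l^2*‖φ x‖^2))) := by
        simp only [hN]
        apply integral_congr_ae
        filter_upwards with y
        exact nl_eq_mul_g μ l (φ y)
      rw [hNeq, MeasureTheory.integral_const_mul]
      rw [← mul_assoc, inv_mul_cancel₀ hl', one_mul]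
    apply HasDerivAt.congr_of_eventuallyEq _ hev
    convert total using 1 <;> try rfl
    rw [hgN, hIval l hl]
    field_simp
    ring
  -- integrability of the H-integrand
  have hint : ∀ l : ℝ, 0 < l →
      Integrable (fun x => 4*π*‖φ x‖^4 * kmu μ (4*π*l^2*‖φ x‖^2)) volume := by
    intro l hl
    have hl' : l ≠ 0 := hl.ne'
    apply (((int_nl hm hφ2 hφexp μ l).sub
      ((int_F hm hφ2 hφexp μ hl').const_mul 2)).const_mul ((l^4)⁻¹)).congr
    filter_upwards with x
    simp only [Pi.sub_apply]
    rw [nl_sub_two_F μ hl' (φ x)]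
    field_simp
  -- positive measure of the support of φ
  have hposmeas : volume {x : E2 | φ x ≠ 0} ≠ 0 := by
    intro h
    apply hφne
    have : ∀ᵐ x ∂(volume : Measure E2), φ x = 0 := ae_iff.mpr (by simpa using h)
    filter_upwards [this] with x hx
    simpa using hx
  -- strict antitonicity
  have part3 : StrictAntiOn (Phi μ φ) (Set.Ioi (0 : ℝ)) := by
    intro l₁ h₁ l₂ h₂ hlt
    rw [Set.mem_Ioi] at h₁ h₂
    have hdiffint := (hint l₂ h₂).sub (hint l₁ h₁)
    have hnn : ∀ x, 0 ≤ 4*π*‖φ x‖^4 * kmu μ (4*π*l₂^2*‖φ x‖^2)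
        - 4*π*‖φ x‖^4 * kmu μ (4*π*l₁^2*‖φ x‖^2) := by
      intro x
      rcases eq_or_ne (φ x) 0 with hx | hx
      · simp [hx]
      · have hr : (0:ℝ) < ‖φ x‖^2 := pow_pos (norm_pos_iff.mpr hx) 2
        have hs1 : (0:ℝ) < 4*π*l₁^2*‖φ x‖^2 :=
          mul_pos (mul_pos (by positivity) (pow_pos h₁ 2)) hr
        have hs2 : (0:ℝ) < 4*π*l₂^2*‖φ x‖^2 :=
          mul_pos (mul_pos (by positivity) (pow_pos h₂ 2)) hr
        have hss : 4*π*l₁^2*‖φ x‖^2 < 4*π*l₂^2*‖φ x‖^2 := by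
          have : l₁^2 < l₂^2 := by nlinarith
          nlinarith [Real.pi_pos]
        have := (kmu_strictMonoOn μ (Set.mem_Ioi.mpr hs1) (Set.mem_Ioi.mpr hs2) hss).le
        have h4 : (0:ℝ) ≤ 4*π*‖φ x‖^4 := by positivity
        nlinarith
    have hspos : ∀ x, φ x ≠ 0 → 0 < 4*π*‖φ x‖^4 * kmu μ (4*π*l₂^2*‖φ x‖^2)
        - 4*π*‖φ x‖^4 * kmu μ (4*π*l₁^2*‖φ x‖^2) := by
      intro x hx
      have hr : (0:ℝ) < ‖φ x‖^2 := pow_pos (norm_pos_iff.mpr hx) 2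
      have hs1 : (0:ℝ) < 4*π*l₁^2*‖φ x‖^2 :=
        mul_pos (mul_pos (by positivity) (pow_pos h₁ 2)) hr
      have hs2 : (0:ℝ) < 4*π*l₂^2*‖φ x‖^2 :=
        mul_pos (mul_pos (by positivity) (pow_pos h₂ 2)) hr
      have hss : 4*π*l₁^2*‖φ x‖^2 < 4*π*l₂^2*‖φ x‖^2 := by
        have : l₁^2 < l₂^2 := by nlinarith
        nlinarith [Real.pi_pos]
      have hk := kmu_strictMonoOn μ (Set.mem_Ioi.mpr hs1) (Set.mem_Ioi.mpr hs2) hss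
      have h4 : (0:ℝ) < 4*π*‖φ x‖^4 :=
        mul_pos (by positivity) (pow_pos (norm_pos_iff.mpr hx) 4)
      nlinarith
    have hHlt : H l₁ < H l₂ := by
      have hpos : 0 < ∫ x : E2, (4*π*‖φ x‖^4 * kmu μ (4*π*l₂^2*‖φ x‖^2)
          - 4*π*‖φ x‖^4 * kmu μ (4*π*l₁^2*‖φ x‖^2)) := by
        rw [integral_pos_iff_support_of_nonneg_ae (Eventually.of_forall hnn) hdiffint]
        have hsupp : Function.support (fun x => 4*π*‖φ x‖^4 * kmu μ (4*π*l₂^2*‖φ x‖^2)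
            - 4*π*‖φ x‖^4 * kmu μ (4*π*l₁^2*‖φ x‖^2)) = {x : E2 | φ x ≠ 0} := by
          ext x
          simp only [Function.mem_support, Set.mem_setOf_eq]
          constructor
          · intro h hx
            exact h (by simp [hx])
          · intro hx
            exact (hspos x hx).ne'
        rw [hsupp]
        exact lt_of_le_of_ne zero_le (Ne.symm hposmeas)
      have := integral_sub (hint l₂ h₂) (hint l₁ h₁)
      simp only [hH]
      rw [this] at hpos
      have heq : ∀ l : ℝ, (∫ x : E2, 4*π*‖φ x‖^4 * kmu μ (4*π*l^2*‖φ x‖^2))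
          = ∫ x : E2, 4 * π * ‖φ x‖ ^ 4 * kmu μ (4 * π * l ^ 2 * ‖φ x‖ ^ 2) := fun l => rfl
      linarith [hpos]
    simp only [Phi, ← hH]
    linarith
  -- the limit as l → 0⁺
  have part4 : Filter.Tendsto (Phi μ φ) (𝓝[>] (0 : ℝ))
      (𝓝 (gradSq φ - 2 * π * (1 - μ) * ∫ x : E2, ‖φ x‖ ^ 4)) := by
    have hHlim : Tendsto H (𝓝[>] (0:ℝ)) (𝓝 (∫ x : E2, 2 * π * (1 - μ) * ‖φ x‖ ^ 4)) := by
      apply tendsto_integral_filter_of_dominated_convergence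
        (bound := fun x => 4*π*‖φ x‖^4 * (kmu μ (4*π*‖φ x‖^2) + μ))
      · filter_upwards [self_mem_nhdsWithin] with l hl
        exact (hint l hl).aestronglyMeasurable
      · filter_upwards [Ioo_mem_nhdsGT_of_mem (Set.left_mem_Ico.mpr one_pos)] with l hl
        apply Eventually.of_forall
        intro x
        rcases eq_or_ne (φ x) 0 with hx | hx
        · simp [hx]
        · have hr : (0:ℝ) < ‖φ x‖^2 := pow_pos (norm_pos_iff.mpr hx) 2
          have hs1 : (0:ℝ) < 4*π*l^2*‖φ x‖^2 :=
            mul_pos (mul_pos (by positivity) (pow_pos hl.1 2)) hr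
          have hs2 : (0:ℝ) < 4*π*‖φ x‖^2 := by positivity
          have hss : 4*π*l^2*‖φ x‖^2 ≤ 4*π*‖φ x‖^2 := by
            have h1 : l^2 ≤ 1 := by nlinarith [hl.1.le, hl.2.le]
            nlinarith [Real.pi_pos]
          have hk2 : kmu μ (4*π*l^2*‖φ x‖^2) ≤ kmu μ (4*π*‖φ x‖^2) := by
            rcases eq_or_lt_of_le hss with heq | hlt
            · rw [heq]
            · exact (kmu_strictMonoOn μ (Set.mem_Ioi.mpr hs1) (Set.mem_Ioi.mpr hs2) hlt).le
          have hk1 := kmu_add_half_pos (μ := μ) hs1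
          have hk3 := kmu_add_half_pos (μ := μ) hs2
          have habs : |kmu μ (4*π*l^2*‖φ x‖^2)| ≤ kmu μ (4*π*‖φ x‖^2) + μ := by
            rw [abs_le]
            constructor <;> linarith
          rw [Real.norm_eq_abs,
            show (4 * π * ‖φ x‖ ^ 4 * kmu μ (4 * π * l ^ 2 * ‖φ x‖ ^ 2))
              = 4*π*‖φ x‖^4 * kmu μ (4*π*l^2*‖φ x‖^2) from rfl, abs_mul,
            abs_of_nonneg (show (0:ℝ) ≤ 4*π*‖φ x‖^4 by positivity)]
          exact mul_le_mul_of_nonneg_left habs (by positivity)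
      · have h1 : Integrable (fun x => 4*π*‖φ x‖^4 * kmu μ (4*π*(1:ℝ)^2*‖φ x‖^2)) volume :=
          hint 1 one_pos
        have h2 : Integrable (fun x : E2 => 4*π*‖φ x‖^4 * kmu μ (4*π*‖φ x‖^2)
            + 4*π*μ*‖φ x‖^4) volume := by
          apply Integrable.add _ ((int_pow4 hm hφexp).const_mul (4*π*μ))
          apply h1.congr
          filter_upwards with x
          norm_num
        apply h2.congr
        filter_upwards with x
        ring
      · apply Eventually.of_forall
        intro x
        rcases eq_or_ne (φ x) 0 with hx | hx
        · simp only [hx, norm_zero]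
          norm_num
        · have hr : (0:ℝ) < ‖φ x‖^2 := pow_pos (norm_pos_iff.mpr hx) 2
          have hcomp : Tendsto (fun l : ℝ => 4*π*l^2*‖φ x‖^2) (𝓝[>] (0:ℝ)) (𝓝[>] (0:ℝ)) := by
            rw [tendsto_nhdsWithin_iff]
            constructor
            · have hc : Continuous (fun l : ℝ => 4*π*l^2*‖φ x‖^2) := by fun_prop
              have := (hc.tendsto 0).mono_left (nhdsWithin_le_nhds (s := Set.Ioi (0:ℝ)))
              simpa using this
            · filter_upwards [self_mem_nhdsWithin] with l hl
              have hl' : (0:ℝ) < l := hl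
              exact Set.mem_Ioi.mpr (by positivity)
          have hklim := (kmu_tendsto μ).comp hcomp
          have := hklim.const_mul (4*π*‖φ x‖^4)
          have heq : 2*π*(1-μ)*‖φ x‖^4 = 4*π*‖φ x‖^4*(1/2-μ/2) := by ring
          rw [show (2 * π * (1 - μ) * ‖φ x‖ ^ 4) = 4*π*‖φ x‖^4*(1/2-μ/2) from by ring]
          exact this
    have hconst : (∫ x : E2, 2 * π * (1 - μ) * ‖φ x‖ ^ 4)
        = 2 * π * (1 - μ) * ∫ x : E2, ‖φ x‖ ^ 4 := MeasureTheory.integral_const_mul _ _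
    have : Tendsto (fun l => gradSq φ - H l) (𝓝[>] (0:ℝ))
        (𝓝 (gradSq φ - 2 * π * (1 - μ) * ∫ x : E2, ‖φ x‖ ^ 4)) := by
      rw [← hconst]
      exact tendsto_const_nhds.sub hHlim
    exact this
  refine ⟨part1, part2, part3, part4, ?_⟩
  -- part (v)
  intro lm hlm hPhi0
  constructor
  · intro l hl hP0
    by_contra hne
    rcases lt_or_gt_of_ne hne with hlt | hgt
    · have := part3 (Set.mem_Ioi.mpr hl) (Set.mem_Ioi.mpr hlm) hlt
      rw [hP0, hPhi0] at this
      exact lt_irrefl 0 this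
    · have := part3 (Set.mem_Ioi.mpr hlm) (Set.mem_Ioi.mpr hl) hgt
      rw [hP0, hPhi0] at this
      exact lt_irrefl 0 this
  · intro l hl hne
    have hderiv : ∀ t : ℝ, 0 < t →
        HasDerivAt (fun l' : ℝ => Smu μ (scl l' φ)) (t * Phi μ φ t) t := by
      intro t ht
      have h := part1 t ht
      rw [part2 t ht] at h
      have : t ^ 2 * Phi μ φ t / t = t * Phi μ φ t := by
        field_simp
      rwa [this] at h
    rcases hne.lt_or_gt with hlt | hgt
    · have hmono : StrictMonoOn (fun l' : ℝ => Smu μ (scl l' φ)) (Set.Ioc 0 lm) := by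
        apply strictMonoOn_of_deriv_pos (convex_Ioc 0 lm)
        · intro t ht
          exact ((hderiv t ht.1).continuousAt).continuousWithinAt
        · intro t ht
          rw [interior_Ioc] at ht
          rw [(hderiv t ht.1).deriv]
          have hPt : 0 < Phi μ φ t := by
            have := part3 (Set.mem_Ioi.mpr ht.1) (Set.mem_Ioi.mpr hlm) ht.2
            rwa [hPhi0] at this
          exact mul_pos ht.1 hPt
      exact hmono ⟨hl, hlt.le⟩ ⟨hlm, le_refl lm⟩ hlt
    · have hanti : StrictAntiOn (fun l' : ℝ => Smu μ (scl l' φ)) (Set.Ici lm) := by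
        apply strictAntiOn_of_deriv_neg (convex_Ici lm)
        · intro t ht
          have ht0 : 0 < t := lt_of_lt_of_le hlm ht
          exact ((hderiv t ht0).continuousAt).continuousWithinAt
        · intro t ht
          rw [interior_Ici] at ht
          have ht0 : 0 < t := lt_trans hlm ht
          rw [(hderiv t ht0).deriv]
          have hPt : Phi μ φ t < 0 := by
            have := part3 (Set.mem_Ioi.mpr hlm) (Set.mem_Ioi.mpr ht0) ht
            rwa [hPhi0] at this
          exact mul_neg_of_pos_of_neg ht0 hPt
      exact hanti (Set.mem_Ici.mpr (le_refl lm)) (Set.mem_Ici.mpr hgt.le) hgt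
end
end
end
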